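/- arXiv:1508.01266 — 4 statements merged into one kernel-verified Lean document; each statement's English description precedes it below -/
import Mathlib

section
/- Let G be a connected nontrivial graph with a'(G) = Δ(G) > 1. Then for every d ≥ 1, a'(G^d) = d·Δ(G), where G^d is the d-fold cartesian power of G. -/
open SimpleGraph

/-- An edge colouring of `G` is proper if distinct edges sharing a vertex
receive distinct colours. -/
def IsProperEdgeColoring {V : Type*} {γ : Type*} (G : SimpleGraph V) (c : Sym2 V → γ) : Prop :=
  ∀ e₁ ∈ G.edgeSet, ∀ e₂ ∈ G.edgeSet, e₁ ≠ e₂ → (∃ v, v ∈ e₁ ∧ v ∈ e₂) → c e₁ ≠ c e₂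

/-- The subgraph of `G` formed by the union of the colour classes `a` and `b`. -/
def twoColourSubgraph {V : Type*} {γ : Type*} (G : SimpleGraph V) (c : Sym2 V → γ)
    (a b : γ) : SimpleGraph V where
  Adj x y := G.Adj x y ∧ (c s(x, y) = a ∨ c s(x, y) = b)
  symm := ⟨fun x y h => ⟨h.1.symm, by rw [Sym2.eq_swap]; exact h.2⟩⟩
  loopless := ⟨fun x h => G.loopless.irrefl x h.1⟩

/-- A proper edge colouring is acyclic if the union of any two colour classes
is a forest. -/
def IsAcyclicEdgeColoring {V : Type*} {γ : Type*} (G : SimpleGraph V) (c : Sym2 V → γ) : Prop :=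
  IsProperEdgeColoring G c ∧ ∀ a b : γ, (twoColourSubgraph G c a b).IsAcyclic

/-- The acyclic chromatic index `a'(G)`: the least number of colours in an
acyclic proper edge colouring of `G`. -/
noncomputable def acyclicChromaticIndex {V : Type*} (G : SimpleGraph V) : ℕ :=
  sInf { n | ∃ c : Sym2 V → Fin n, IsAcyclicEdgeColoring G c }

/-- The cartesian (box) product of a family of graphs: two tuples are adjacent
iff they differ in exactly one coordinate, and are adjacent there. -/
def piBoxProd {ι : Type*} {V : ι → Type*} (G : ∀ i, SimpleGraph (V i)) :
    SimpleGraph (∀ i, V i) where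
  Adj x y := ∃ i, (G i).Adj (x i) (y i) ∧ ∀ j, j ≠ i → x j = y j
  symm := ⟨fun x y => by
    rintro ⟨i, h, hj⟩
    exact ⟨i, h.symm, fun j hji => (hj j hji).symm⟩⟩
  loopless := ⟨fun x => by
    rintro ⟨i, h, -⟩
    exact (G i).loopless.irrefl _ h⟩

section LemA
variable {V : Type*} {H : SimpleGraph V}

lemma isAcyclic_anti {H K : SimpleGraph V} (hle : H ≤ K) (hK : K.IsAcyclic) : H.IsAcyclic := by
  intro v p hp
  exact hK (p.mapLe hle) ((Walk.mapLe_isCycle hle).mpr hp)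

lemma chain_isPath (hH : H.IsAcyclic) :
    ∀ {u v : V} (p : H.Walk u v), List.Chain' (· ≠ ·) p.edges → p.IsPath := by
  classical
  intro u v p
  induction p with
  | nil => intro _; simp
  | @cons u w v h q ih =>
    intro hch
    rw [Walk.edges_cons] at hch; simp only [List.Chain', List.isChain_cons] at hch
    have hq : q.IsPath := ih hch.2
    rw [Walk.cons_isPath_iff]
    refine ⟨hq, fun hu => ?_⟩
    have hr : (q.takeUntil u hu).IsPath := hq.takeUntil hu
    have hs : (Walk.cons h.symm Walk.nil : H.Walk w u).IsPath := by
      simp [Walk.isPath_def, h.ne']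
    have hune := isAcyclic_iff_path_unique.mp hH ⟨q.takeUntil u hu, hr⟩ ⟨_, hs⟩
    have hwalk : q.takeUntil u hu = Walk.cons h.symm Walk.nil := congrArg Subtype.val hune
    have hsp := q.take_spec hu
    have hedges : q.edges = s(w, u) :: (q.dropUntil u hu).edges := by
      conv_lhs => rw [← hsp]
      rw [Walk.edges_append, hwalk]
      simp
    have := hch.1 s(w, u) (by rw [hedges]; rfl)
    exact this (Sym2.eq_swap)

lemma closed_chain_nil (hH : H.IsAcyclic) {u : V} (p : H.Walk u u)
    (hch : List.Chain' (· ≠ ·) p.edges) : p.length = 0 := by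
  have hp := chain_isPath hH p hch
  cases p with
  | nil => rfl
  | cons h q =>
    rw [Walk.cons_isPath_iff] at hp
    exact absurd q.end_mem_support hp.2

end LemA

section Proper
variable {V : Type*} {γ : Type*} {G : SimpleGraph V} {c : Sym2 V → γ}

lemma proper_unique (hp : IsProperEdgeColoring G c) {v w w' : V}
    (h : G.Adj v w) (h' : G.Adj v w') (hc : c s(v, w) = c s(v, w')) : w = w' := by
  by_contra hne
  have hee : s(v, w) ≠ s(v, w') := by
    intro hEq
    rw [Sym2.eq_iff] at hEq
    rcases hEq with ⟨-, h2⟩ | ⟨h1, -⟩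
    · exact hne h2
    · exact h'.ne' h1.symm
  exact hp _ h _ h' hee ⟨v, by simp, by simp⟩ hc

lemma twoColour_mem_edge {a b : γ} {e : Sym2 V}
    (he : e ∈ (twoColourSubgraph G c a b).edgeSet) : e ∈ G.edgeSet ∧ (c e = a ∨ c e = b) := by
  induction e with
  | _ x y => exact ⟨he.1, he.2⟩

lemma IsAcyclicEdgeColoring.comp {δ : Type*} [Nonempty γ] {g : γ → δ} (hg : Function.Injective g)
    (hc : IsAcyclicEdgeColoring G c) : IsAcyclicEdgeColoring G (g ∘ c) := by
  classical
  constructor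
  · intro e₁ h₁ e₂ h₂ hne hshare
    exact fun h => hc.1 e₁ h₁ e₂ h₂ hne hshare (hg h)
  · intro A B
    set a : γ := if h : ∃ t, g t = A then h.choose else Classical.arbitrary γ with ha
    set b : γ := if h : ∃ t, g t = B then h.choose else Classical.arbitrary γ with hb
    refine isAcyclic_anti (fun x y hxy => ?_) (hc.2 a b)
    obtain ⟨hadj, hcol⟩ := hxy
    refine ⟨hadj, ?_⟩
    rcases hcol with h | h
    · left
      have hex : ∃ t, g t = A := ⟨c s(x, y), h⟩
      rw [ha, dif_pos hex]
      exact hg (h.trans hex.choose_spec.symm)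
    · right
      have hex : ∃ t, g t = B := ⟨c s(x, y), h⟩
      rw [hb, dif_pos hex]
      exact hg (h.trans hex.choose_spec.symm)

lemma exists_injective_acyclic (G : SimpleGraph V) [Fintype V] [DecidableEq V] :
    ∃ cc : Sym2 V → Fin (Fintype.card (Sym2 V)), IsAcyclicEdgeColoring G cc := by
  classical
  refine ⟨Fintype.equivFin (Sym2 V), ?_, ?_⟩
  · intro e₁ _ e₂ _ hne _
    exact fun h => hne ((Fintype.equivFin (Sym2 V)).injective h)
  · intro a b v p hp
    have hlen : 3 ≤ p.edges.length := by
      rw [Walk.length_edges]; exact hp.three_le_length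
    have hnd : p.edges.Nodup := hp.edges_nodup
    obtain ⟨e₁, e₂, e₃, rest, hE⟩ : ∃ e₁ e₂ e₃ rest, p.edges = e₁ :: e₂ :: e₃ :: rest := by
      match hl : p.edges with
      | [] => rw [hl] at hlen; simp at hlen
      | [x] => rw [hl] at hlen; simp at hlen
      | [x, y] => rw [hl] at hlen; simp at hlen
      | x :: y :: z :: r => exact ⟨x, y, z, r, rfl⟩
    have hmem : ∀ e ∈ p.edges, (Fintype.equivFin (Sym2 V)) e = a ∨ (Fintype.equivFin (Sym2 V)) e = b := by
      intro e he
      exact (twoColour_mem_edge (p.edges_subset_edgeSet he)).2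
    rw [hE] at hnd hmem
    have h1 := hmem e₁ (by simp)
    have h2 := hmem e₂ (by simp)
    have h3 := hmem e₃ (by simp)
    have hne12 : e₁ ≠ e₂ := by simp at hnd; tauto
    have hne13 : e₁ ≠ e₃ := by simp at hnd; tauto
    have hne23 : e₂ ≠ e₃ := by simp at hnd; tauto
    have hinj := (Fintype.equivFin (Sym2 V)).injective
    rcases h1 with h1 | h1 <;> rcases h2 with h2 | h2 <;> rcases h3 with h3 | h3
    · exact hne12 (hinj (h1.trans h2.symm))
    · exact hne12 (hinj (h1.trans h2.symm))
    · exact hne13 (hinj (h1.trans h3.symm))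
    · exact hne23 (hinj (h2.trans h3.symm))
    · exact hne23 (hinj (h2.trans h3.symm))
    · exact hne13 (hinj (h1.trans h3.symm))
    · exact hne12 (hinj (h1.trans h2.symm))
    · exact hne12 (hinj (h1.trans h2.symm))

end Proper

section Greedy
variable {β : Type*} [Fintype β] [DecidableEq β]

lemma greedy_col (H : SimpleGraph β) [DecidableRel H.Adj] {k : ℕ} (hk : 0 < k)
    (hS : ∀ S : Finset β, S.Nonempty → ∃ v ∈ S, (S.filter (H.Adj v)).card < k) :
    ∃ f : β → Fin k, ∀ x y, H.Adj x y → f x ≠ f y := by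
  suffices h : ∀ S : Finset β, ∃ f : β → Fin k, ∀ x ∈ S, ∀ y ∈ S, H.Adj x y → f x ≠ f y by
    obtain ⟨f, hf⟩ := h Finset.univ
    exact ⟨f, fun x y hxy => hf x (Finset.mem_univ x) y (Finset.mem_univ y) hxy⟩
  intro S
  induction S using Finset.strongInduction with
  | _ S ih =>
    rcases S.eq_empty_or_nonempty with rfl | hne
    · exact ⟨fun _ => ⟨0, hk⟩, by simp⟩
    obtain ⟨v, hv, hdeg⟩ := hS S hne
    obtain ⟨f, hf⟩ := ih (S.erase v) (Finset.erase_ssubset hv)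
    set T : Finset (Fin k) := ((S.erase v).filter (H.Adj v)).image f with hT
    have hTcard : T.card < k := by
      calc T.card ≤ ((S.erase v).filter (H.Adj v)).card := Finset.card_image_le
        _ ≤ (S.filter (H.Adj v)).card :=
            Finset.card_le_card (Finset.filter_subset_filter _ (S.erase_subset v))
        _ < k := hdeg
    have hex : ∃ γ : Fin k, γ ∉ T := by
      by_contra hcon
      push_neg at hcon
      have : (Finset.univ : Finset (Fin k)) ⊆ T := fun γ _ => hcon γ
      have := Finset.card_le_card this
      simp at this
      omega
    obtain ⟨γ, hγ⟩ := hex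
    refine ⟨Function.update f v γ, ?_⟩
    intro x hx y hy hxy
    by_cases hxv : x = v
    · subst hxv
      have hyv : y ≠ x := fun h => H.loopless.irrefl x (h ▸ hxy)
      rw [Function.update_self, Function.update_of_ne hyv]
      intro h
      apply hγ
      rw [h]
      exact Finset.mem_image_of_mem f
        (Finset.mem_filter.mpr ⟨Finset.mem_erase.mpr ⟨hyv, hy⟩, hxy⟩)
    · by_cases hyv : y = v
      · subst hyv
        rw [Function.update_self, Function.update_of_ne hxv]
        intro h
        apply hγ
        rw [← h]
        exact Finset.mem_image_of_mem f
          (Finset.mem_filter.mpr ⟨Finset.mem_erase.mpr ⟨hxv, hx⟩, hxy.symm⟩)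
      · rw [Function.update_of_ne hxv, Function.update_of_ne hyv]
        exact hf x (Finset.mem_erase.mpr ⟨hxv, hx⟩) y (Finset.mem_erase.mpr ⟨hyv, hy⟩) hxy

end Greedy

section VC
variable {α : Type*} [Fintype α] [Nontrivial α] (G : SimpleGraph α) [DecidableRel G.Adj]

lemma exists_small_degree (hconn : G.Connected) {cc : Sym2 α → Fin G.maxDegree}
    (hcc : IsAcyclicEdgeColoring G cc) (hgt : 1 < G.maxDegree) :
    ∃ v, G.degree v < G.maxDegree := by
  classical
  by_contra hcon
  push_neg at hcon
  have hreg : ∀ v, G.degree v = G.maxDegree :=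
    fun v => le_antisymm (G.degree_le_maxDegree v) (hcon v)
  -- every vertex sees every colour
  have hsurj : ∀ (v : α) (γ : Fin G.maxDegree), ∃ u, G.Adj v u ∧ cc s(v, u) = γ := by
    intro v γ
    have hinj : Set.InjOn (fun u => cc s(v, u)) (G.neighborFinset v) := by
      intro u hu u' hu' h
      simp only [Finset.mem_coe, SimpleGraph.mem_neighborFinset] at hu hu'
      exact proper_unique hcc.1 hu hu' h
    have hcard : ((G.neighborFinset v).image (fun u => cc s(v, u))).card =
        Fintype.card (Fin G.maxDegree) := by
      rw [Finset.card_image_of_injOn hinj, G.card_neighborFinset_eq_degree, hreg v,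
        Fintype.card_fin]
    have huniv := Finset.eq_univ_of_card _ hcard
    have : γ ∈ (G.neighborFinset v).image (fun u => cc s(v, u)) := huniv ▸ Finset.mem_univ γ
    obtain ⟨u, hu, hcu⟩ := Finset.mem_image.mp this
    exact ⟨u, (SimpleGraph.mem_neighborFinset _ _ _).mp hu, hcu⟩
  set a : Fin G.maxDegree := ⟨0, lt_trans one_pos hgt⟩ with ha
  set b : Fin G.maxDegree := ⟨1, hgt⟩ with hb
  have hab : a ≠ b := by simp [ha, hb, Fin.ext_iff]
  set H₀ := twoColourSubgraph G cc a b with hH₀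
  have hHacyc : H₀.IsAcyclic := hcc.2 a b
  have htwo : ∀ (v : α) (y : α), ∃ z, H₀.Adj v z ∧ z ≠ y := by
    intro v y
    obtain ⟨u₀, hu₀, hc₀⟩ := hsurj v a
    obtain ⟨u₁, hu₁, hc₁⟩ := hsurj v b
    have hne : u₀ ≠ u₁ := by
      intro h
      subst h
      exact hab (hc₀ ▸ hc₁ ▸ rfl)
    by_cases h0 : u₀ = y
    · exact ⟨u₁, ⟨hu₁, Or.inr hc₁⟩, fun h => hne (h0.trans h.symm)⟩
    · exact ⟨u₀, ⟨hu₀, Or.inl hc₀⟩, h0⟩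
  obtain ⟨v₀⟩ := (inferInstance : Nonempty α)
  have hwalk : ∀ n : ℕ, ∃ (x : α) (p : H₀.Walk x v₀),
      p.length = n ∧ List.Chain' (· ≠ ·) p.edges := by
    intro n
    induction n with
    | zero => exact ⟨v₀, Walk.nil, rfl, List.isChain_nil⟩
    | succ n ih =>
      obtain ⟨x, p, hl, hc⟩ := ih
      cases p with
      | nil =>
        obtain ⟨z, hz, -⟩ := htwo v₀ v₀
        exact ⟨z, Walk.cons hz.symm Walk.nil, by simp [← hl], List.isChain_singleton _⟩
      | @cons _ y _ h q =>
        obtain ⟨z, hz, hzy⟩ := htwo x y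
        refine ⟨z, Walk.cons hz.symm (Walk.cons h q), by simp [← hl], ?_⟩
        rw [Walk.edges_cons]; simp only [List.Chain', List.isChain_cons]
        refine ⟨?_, hc⟩
        intro e he
        rw [Walk.edges_cons] at he
        simp only [List.head?_cons, Option.mem_def, Option.some.injEq] at he
        subst he
        intro hEq
        rw [Sym2.eq_iff] at hEq
        rcases hEq with ⟨h1, -⟩ | ⟨h2, -⟩
        · exact hz.ne' h1
        · exact hzy h2
  obtain ⟨x, p, hl, hc⟩ := hwalk (Fintype.card α)
  have := (chain_isPath hHacyc p hc).length_lt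
  omega

lemma exists_proper_vertex_coloring (hconn : G.Connected) {cc : Sym2 α → Fin G.maxDegree}
    (hcc : IsAcyclicEdgeColoring G cc) (hgt : 1 < G.maxDegree) :
    ∃ f : α → Fin G.maxDegree, ∀ x y, G.Adj x y → f x ≠ f y := by
  classical
  obtain ⟨v, hv⟩ := exists_small_degree G hconn hcc hgt
  apply greedy_col G (lt_trans one_pos hgt)
  intro S hSne
  by_cases hSuniv : S = Finset.univ
  · refine ⟨v, by simp [hSuniv], ?_⟩
    subst hSuniv
    have : Finset.univ.filter (G.Adj v) = G.neighborFinset v := by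
      ext u; simp [SimpleGraph.mem_neighborFinset]
    rw [this, G.card_neighborFinset_eq_degree]
    exact hv
  · -- find a vertex of S with a neighbour outside S
    have hbound : ∀ {x y : α} (p : G.Walk x y), x ∈ S → y ∉ S →
        ∃ v ∈ S, ∃ w, G.Adj v w ∧ w ∉ S := by
      intro x y p
      induction p with
      | nil => intro hx hy; exact absurd hx hy
      | @cons x z y h q ih =>
        intro hx hy
        by_cases hz : z ∈ S
        · exact ih hz hy
        · exact ⟨x, hx, z, h, hz⟩
    obtain ⟨w₀, hw₀⟩ : ∃ w₀, w₀ ∉ S := by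
      by_contra hcon
      push_neg at hcon
      exact hSuniv (Finset.eq_univ_of_forall hcon)
    obtain ⟨x₀, hx₀⟩ := hSne
    obtain ⟨u, hu, w, huw, hwS⟩ := hbound ((hconn.preconnected x₀ w₀).some) hx₀ hw₀
    refine ⟨u, hu, ?_⟩
    have hsub : S.filter (G.Adj u) ⊆ (G.neighborFinset u).erase w := by
      intro z hz
      rw [Finset.mem_filter] at hz
      rw [Finset.mem_erase, SimpleGraph.mem_neighborFinset]
      exact ⟨fun h => hwS (h ▸ hz.1), hz.2⟩
    have hcard := Finset.card_le_card hsub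
    rw [Finset.card_erase_of_mem ((SimpleGraph.mem_neighborFinset _ _ _).mpr huw),
      G.card_neighborFinset_eq_degree] at hcard
    have hdeg := G.degree_le_maxDegree u
    have hdegpos : 0 < G.degree u := by
      rw [← G.card_neighborFinset_eq_degree]
      exact Finset.card_pos.mpr ⟨w, (SimpleGraph.mem_neighborFinset _ _ _).mpr huw⟩
    omega

end VC

section Construction
variable {α : Type*} {d : ℕ} {Δ : ℕ} [NeZero Δ]

def shiftSum (f : α → Fin Δ) (i : Fin d) (x : Fin d → α) : Fin Δ :=
  ∑ k ∈ Finset.univ.filter (fun k => i < k), f (x k)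

lemma shiftSum_congr (f : α → Fin Δ) {i : Fin d} {x y : Fin d → α}
    (h : ∀ k, i < k → x k = y k) : shiftSum f i x = shiftSum f i y :=
  Finset.sum_congr rfl fun k hk => by rw [h k (Finset.mem_filter.mp hk).2]

lemma changed_unique {x y : Fin d → α} {i i' : Fin d}
    (h : x i ≠ y i ∧ ∀ j, j ≠ i → x j = y j)
    (h' : x i' ≠ y i' ∧ ∀ j, j ≠ i' → x j = y j) : i = i' := by
  by_contra hne
  exact h'.1 (h.2 i' (fun hc => hne hc.symm))

variable [NeZero d]

open Classical in
noncomputable def prodColorFun (cc : Sym2 α → Fin Δ) (f : α → Fin Δ)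
    (x y : Fin d → α) : Fin d × Fin Δ :=
  if h : ∃ i, x i ≠ y i ∧ ∀ j, j ≠ i → x j = y j then
    (h.choose, cc s(x h.choose, y h.choose) + shiftSum f h.choose x)
  else (0, 0)

lemma prodColorFun_symm (cc : Sym2 α → Fin Δ) (f : α → Fin Δ) (x y : Fin d → α) :
    prodColorFun cc f x y = prodColorFun cc f y x := by
  unfold prodColorFun
  by_cases h : ∃ i, x i ≠ y i ∧ ∀ j, j ≠ i → x j = y j
  · have h' : ∃ i, y i ≠ x i ∧ ∀ j, j ≠ i → y j = x j := by
      obtain ⟨i, h1, h2⟩ := h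
      exact ⟨i, fun hc => h1 hc.symm, fun j hj => (h2 j hj).symm⟩
    rw [dif_pos h, dif_pos h']
    have hch : h'.choose = h.choose := by
      have hs := h'.choose_spec
      exact changed_unique ⟨fun hc => hs.1 hc.symm, fun j hj => (hs.2 j hj).symm⟩ h.choose_spec
    have hoth := h.choose_spec.2
    refine Prod.ext (by rw [hch]) ?_
    simp only [hch]
    rw [Sym2.eq_swap (a := x h.choose)]
    congr 1
    exact shiftSum_congr f fun k hk =>
      hoth k (fun hc => absurd (hc ▸ hk) (lt_irrefl _))
  · have h' : ¬ ∃ i, y i ≠ x i ∧ ∀ j, j ≠ i → y j = x j := by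
      intro ⟨i, h1, h2⟩
      exact h ⟨i, fun hc => h1 hc.symm, fun j hj => (h2 j hj).symm⟩
    rw [dif_neg h, dif_neg h']

noncomputable def prodColor (cc : Sym2 α → Fin Δ) (f : α → Fin Δ) :
    Sym2 (Fin d → α) → Fin d × Fin Δ :=
  Sym2.lift ⟨fun x y => prodColorFun cc f x y, prodColorFun_symm cc f⟩

lemma prodColor_spec (cc : Sym2 α → Fin Δ) (f : α → Fin Δ) {x y : Fin d → α} {i : Fin d}
    (hne : x i ≠ y i) (hoth : ∀ j, j ≠ i → x j = y j) :
    prodColor cc f s(x, y) = (i, cc s(x i, y i) + shiftSum f i x) := by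
  have hex : ∃ m, x m ≠ y m ∧ ∀ j, j ≠ m → x j = y j := ⟨i, hne, hoth⟩
  have : prodColor cc f s(x, y) = prodColorFun cc f x y := rfl
  rw [this]
  unfold prodColorFun
  rw [dif_pos hex]
  have hch : hex.choose = i := changed_unique hex.choose_spec ⟨hne, hoth⟩
  simp only [hch]

lemma prodColor_proper {G : SimpleGraph α} {cc : Sym2 α → Fin Δ} {f : α → Fin Δ}
    (hcc : IsProperEdgeColoring G cc) :
    IsProperEdgeColoring (piBoxProd (fun _ : Fin d => G)) (prodColor cc f) := by
  -- key: two distinct edges at a common vertex get distinct colours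
  have key : ∀ {v w w' : Fin d → α}, (piBoxProd (fun _ : Fin d => G)).Adj v w →
      (piBoxProd (fun _ : Fin d => G)).Adj v w' → w ≠ w' →
      prodColor cc f s(v, w) ≠ prodColor cc f s(v, w') := by
    intro v w w' hvw hvw' hne hcol
    obtain ⟨m, hm, hmo⟩ := hvw
    obtain ⟨m', hm', hmo'⟩ := hvw'
    rw [prodColor_spec cc f hm.ne hmo, prodColor_spec cc f hm'.ne hmo'] at hcol
    have hmm : m = m' := congrArg Prod.fst hcol
    subst hmm
    have hval := congrArg Prod.snd hcol
    simp only at hval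
    have hcceq : cc s(v m, w m) = cc s(v m, w' m) := add_right_cancel hval
    have hwm : w m = w' m := proper_unique hcc hm hm' hcceq
    apply hne
    funext k
    by_cases hk : k = m
    · subst hk; exact hwm
    · rw [← hmo k hk, ← hmo' k hk]
  intro e₁ h₁ e₂ h₂ hne hshare
  obtain ⟨v, hv₁, hv₂⟩ := hshare
  induction e₁ with
  | _ x y =>
    induction e₂ with
    | _ x' y' =>
      rw [Sym2.mem_iff] at hv₁ hv₂
      rw [SimpleGraph.mem_edgeSet] at h₁ h₂
      -- normalize both edges to have v first
      rcases hv₁ with rfl | rfl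
      · rcases hv₂ with rfl | rfl
        · exact key h₁ h₂ (fun h => hne (by rw [h]))
        · rw [Sym2.eq_swap (a := x')] at hne ⊢
          exact key h₁ h₂.symm (fun h => hne (by rw [h]))
      · rw [Sym2.eq_swap (a := x)] at hne ⊢
        rcases hv₂ with rfl | rfl
        · exact key h₁.symm h₂ (fun h => hne (by rw [h]))
        · rw [Sym2.eq_swap (a := x')] at hne ⊢
          exact key h₁.symm h₂.symm (fun h => hne (by rw [h]))

end Construction

section Acyc
variable {α : Type*} {d : ℕ} {Δ : ℕ} [NeZero Δ] [NeZero d]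
variable {G : SimpleGraph α} {cc : Sym2 α → Fin Δ} {f : α → Fin Δ}

lemma twoColour_comm {V γ : Type*} (G : SimpleGraph V) (c : Sym2 V → γ) (a b : γ) :
    twoColourSubgraph G c a b = twoColourSubgraph G c b a := by
  ext x y
  exact and_congr_right fun _ => or_comm

lemma sameCoord_acyclic (hcc : IsAcyclicEdgeColoring G cc) (i : Fin d) (a b : Fin Δ) :
    (twoColourSubgraph (piBoxProd (fun _ : Fin d => G)) (prodColor cc f) (i, a) (i, b)).IsAcyclic := by
  set Gd := piBoxProd (fun _ : Fin d => G) with hGd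
  set Hp := twoColourSubgraph Gd (prodColor cc f) (i, a) (i, b) with hHp
  have edec : ∀ {x y : Fin d → α}, Hp.Adj x y →
      G.Adj (x i) (y i) ∧ (∀ k, k ≠ i → x k = y k) ∧
      (cc s(x i, y i) + shiftSum f i x = a ∨ cc s(x i, y i) + shiftSum f i x = b) := by
    intro x y hxy
    obtain ⟨⟨m, hm, hmo⟩, hcol⟩ := hxy
    rw [prodColor_spec cc f hm.ne hmo] at hcol
    have hmi : m = i := by
      rcases hcol with h | h
      · exact congrArg Prod.fst h
      · exact congrArg Prod.fst h
    subst hmi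
    refine ⟨hm, hmo, ?_⟩
    rcases hcol with h | h
    · exact Or.inl (congrArg Prod.snd h)
    · exact Or.inr (congrArg Prod.snd h)
  intro x₀ p hp
  have hrec : ∀ {u w : Fin d → α} (p : Hp.Walk u w), p.IsTrail →
      ∃ q : (twoColourSubgraph G cc (a - shiftSum f i w) (b - shiftSum f i w)).Walk (u i) (w i),
        List.Chain' (· ≠ ·) q.edges ∧ q.length = p.length ∧ (∀ k, k ≠ i → u k = w k) ∧
        (p.length = 0 ∨ ∃ (z : Fin d → α) (h : Hp.Adj u z) (p₂ : Hp.Walk z w),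
          p = Walk.cons h p₂ ∧ q.edges.head? = some s(u i, z i)) := by
    intro u w p
    induction p with
    | nil => exact fun _ => ⟨Walk.nil, List.isChain_nil, rfl, fun _ _ => rfl, Or.inl rfl⟩
    | @cons x z w h p' ih =>
      intro htrail
      obtain ⟨hGadj, hoth, hcol⟩ := edec h
      obtain ⟨q', hch, hlen, hcoords, htag⟩ := ih htrail.of_cons
      have hxw : ∀ k, k ≠ i → x k = w k := fun k hk => (hoth k hk).trans (hcoords k hk)
      have hshift : shiftSum f i x = shiftSum f i w :=
        shiftSum_congr f fun k hk => hxw k hk.ne'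
      have hMadj : (twoColourSubgraph G cc (a - shiftSum f i w) (b - shiftSum f i w)).Adj
          (x i) (z i) := by
        refine ⟨hGadj, ?_⟩
        rcases hcol with hc | hc
        · left; rw [← hshift]; exact eq_sub_of_add_eq hc
        · right; rw [← hshift]; exact eq_sub_of_add_eq hc
      refine ⟨Walk.cons hMadj q', ?_, by simp [hlen], hxw,
        Or.inr ⟨z, h, p', rfl, by simp⟩⟩
      simp only [Walk.edges_cons, List.Chain', List.isChain_cons]
      refine ⟨?_, hch⟩
      intro e he
      rcases htag with h0 | ⟨z', h', p₂, hp'eq, hhead⟩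
      · have hq'nil : q'.edges = [] := List.length_eq_zero_iff.mp (by rw [Walk.length_edges, hlen, h0])
        rw [hq'nil] at he
        simp at he
      · rw [hhead] at he
        simp only [Option.mem_def, Option.some.injEq] at he
        subst he
        intro hEq
        rw [Sym2.eq_iff] at hEq
        rcases hEq with ⟨h1, -⟩ | ⟨h1, -⟩
        · exact hGadj.ne h1
        · obtain ⟨hGadj2, hoth2, -⟩ := edec h'
          have hxz' : x = z' := by
            funext k
            by_cases hk : k = i
            · subst hk; exact h1
            · exact (hoth k hk).trans (hoth2 k hk)
          have hnodup := htrail.edges_nodup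
          rw [Walk.edges_cons] at hnodup
          have hnotmem : s(x, z) ∉ p'.edges := (List.nodup_cons.mp hnodup).1
          apply hnotmem
          rw [hp'eq, Walk.edges_cons]
          have : s(x, z) = s(z, z') := by
            rw [hxz']
            exact Sym2.eq_swap
          rw [this]
          exact List.mem_cons_self
  obtain ⟨q, hch, hlen, -, -⟩ := hrec p ⟨hp.edges_nodup⟩
  have h0 := closed_chain_nil (hcc.2 _ _) q hch
  have h3 := hp.three_le_length
  omega

end Acyc

section Mixed
variable {α : Type*} {d : ℕ} {Δ : ℕ} [NeZero Δ] [NeZero d]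
variable {G : SimpleGraph α} {cc : Sym2 α → Fin Δ} {f : α → Fin Δ}

lemma mixed_acyclic (hcc : IsAcyclicEdgeColoring G cc) (hf : ∀ x y, G.Adj x y → f x ≠ f y)
    {i j : Fin d} (hij : i < j) (a b : Fin Δ) :
    (twoColourSubgraph (piBoxProd (fun _ : Fin d => G)) (prodColor cc f) (i, a) (j, b)).IsAcyclic := by
  classical
  have hji : j ≠ i := hij.ne'
  have hijne : i ≠ j := hij.ne
  set Gd := piBoxProd (fun _ : Fin d => G) with hGd
  set Hp := twoColourSubgraph Gd (prodColor cc f) (i, a) (j, b) with hHp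
  have hprop : IsProperEdgeColoring Gd (prodColor cc f) := prodColor_proper hcc.1
  have edec : ∀ {x y : Fin d → α}, Hp.Adj x y →
      (G.Adj (x i) (y i) ∧ (∀ k, k ≠ i → x k = y k) ∧
        cc s(x i, y i) + shiftSum f i x = a ∧ prodColor cc f s(x, y) = (i, a)) ∨
      (G.Adj (x j) (y j) ∧ (∀ k, k ≠ j → x k = y k) ∧
        cc s(x j, y j) + shiftSum f j x = b ∧ prodColor cc f s(x, y) = (j, b)) := by
    intro x y hxy
    obtain ⟨⟨m, hm, hmo⟩, hcol⟩ := hxy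
    have hspec := prodColor_spec cc f hm.ne hmo
    rcases hcol with h | h
    · left
      have hmi : m = i := congrArg Prod.fst (hspec.symm.trans h)
      subst hmi
      exact ⟨hm, hmo, congrArg Prod.snd (hspec.symm.trans h), h⟩
    · right
      have hmj : m = j := congrArg Prod.fst (hspec.symm.trans h)
      subst hmj
      exact ⟨hm, hmo, congrArg Prod.snd (hspec.symm.trans h), h⟩
  have hpropContr : ∀ {u z z₂ : Fin d → α}, Hp.Adj u z → Hp.Adj z z₂ → s(u, z) ≠ s(z, z₂) →
      prodColor cc f s(u, z) = prodColor cc f s(z, z₂) → False := by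
    intro u z z₂ h h₂ hne hc
    exact hprop _ ((piBoxProd _).mem_edgeSet.mpr h.1) _ ((piBoxProd _).mem_edgeSet.mpr h₂.1)
      hne ⟨z, by simp, by simp⟩ hc
  have hshifti : ∀ (w u : Fin d → α), (∀ k, k ≠ i → k ≠ j → u k = w k) →
      shiftSum f i u = f (u j) + ∑ k ∈ (Finset.univ.filter fun k => i < k).erase j, f (w k) := by
    intro w u hcoords
    have hmem : j ∈ Finset.univ.filter (fun k => i < k) := by simp [hij]
    have h1 : shiftSum f i u
        = f (u j) + ∑ k ∈ (Finset.univ.filter fun k => i < k).erase j, f (u k) :=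
      (Finset.add_sum_erase _ (fun k => f (u k)) hmem).symm
    have h2 : ∑ k ∈ (Finset.univ.filter fun k => i < k).erase j, f (u k)
        = ∑ k ∈ (Finset.univ.filter fun k => i < k).erase j, f (w k) := by
      refine Finset.sum_congr rfl fun k hk => ?_
      obtain ⟨hkj, hkf⟩ := Finset.mem_erase.mp hk
      exact congrArg f (hcoords k (Finset.mem_filter.mp hkf).2.ne' hkj)
    rw [h1, h2]
  have hsub : ∀ (t : Fin Δ) (S : Fin Δ), a - S - t = a - (t + S) := by
    intro t S
    rw [sub_sub, add_comm]
  intro x₀ p hp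
  have hrec : ∀ (S : Fin Δ) (v₀ v₁ : α) {u w : Fin d → α} (p : Hp.Walk u w),
      p.IsTrail →
      (S = ∑ k ∈ (Finset.univ.filter fun k => i < k).erase j, f (w k)) →
      (v₀ = w j) →
      (∀ z zz : α, (z = v₀ ∨ z = v₁) → G.Adj z zz →
        cc s(z, zz) = b - shiftSum f j w → (zz = v₀ ∨ zz = v₁)) →
      ∃ q : (twoColourSubgraph G cc (a - S - f v₀) (a - S - f v₁)).Walk (u i) (w i),
        List.Chain' (· ≠ ·) q.edges ∧
        (∀ k, k ≠ i → k ≠ j → u k = w k) ∧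
        (u j = v₀ ∨ u j = v₁) ∧
        (q.length = 0 → p.length ≤ 1) ∧
        ((p.length = 0 ∧ q.length = 0) ∨
         (∃ (z : Fin d → α) (h : Hp.Adj u z) (p₂ : Hp.Walk z w), p = Walk.cons h p₂ ∧
            prodColor cc f s(u, z) = (i, a) ∧
            q.edges.head? = some s(u i, z i) ∧ cc s(u i, z i) = a - S - f (u j)) ∨
         (∃ (z : Fin d → α) (h : Hp.Adj u z) (p₂ : Hp.Walk z w), p = Walk.cons h p₂ ∧
            prodColor cc f s(u, z) = (j, b) ∧
            (q.length = 0 ∧ p₂.length = 0 ∨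
             ∃ uu zz, q.edges.head? = some s(uu, zz) ∧ cc s(uu, zz) = a - S - f (z j)))) := by
    intro S v₀ v₁ u w p
    induction p with
    | nil =>
      intro _ hS hv₀ _
      exact ⟨Walk.nil, List.isChain_nil, fun _ _ _ => rfl, Or.inl hv₀.symm,
        fun _ => by simp, Or.inl ⟨rfl, rfl⟩⟩
    | @cons u z w' h p' ih =>
      intro htrail hS hv₀ hclose
      obtain ⟨q', hch', hcoords', hmemb', hlen0', htag'⟩ := ih htrail.of_cons hS hv₀ hclose
      have hnodup := htrail.edges_nodup
      rw [Walk.edges_cons] at hnodup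
      have hnotmem : s(u, z) ∉ p'.edges := (List.nodup_cons.mp hnodup).1
      rcases edec h with ⟨hGadj, hoth, hcceq, hcolor⟩ | ⟨hGadj, hoth, hcceq, hcolor⟩
      · -- type i edge
        have hcoords : ∀ k, k ≠ i → k ≠ j → u k = w' k :=
          fun k hki hkj => (hoth k hki).trans (hcoords' k hki hkj)
        have hujz : u j = z j := hoth j hji
        have hmemb : u j = v₀ ∨ u j = v₁ := hujz ▸ hmemb'
        have hccval : cc s(u i, z i) = a - S - f (u j) := by
          have h1 := eq_sub_of_add_eq hcceq
          rw [h1, hshifti w' u hcoords, ← hS, hsub]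
        have hMadj : (twoColourSubgraph G cc (a - S - f v₀) (a - S - f v₁)).Adj (u i) (z i) := by
          refine ⟨hGadj, ?_⟩
          rcases hmemb with hm | hm
          · left; rw [hccval, hm]
          · right; rw [hccval, hm]
        refine ⟨Walk.cons hMadj q', ?_, hcoords, hmemb, fun hc => by simp at hc,
          Or.inr (Or.inl ⟨z, h, p', rfl, hcolor, by simp, hccval⟩)⟩
        simp only [Walk.edges_cons, List.Chain', List.isChain_cons]
        refine ⟨?_, hch'⟩
        intro e he
        rcases htag' with ⟨hp0, hq0⟩ | ⟨z₂, h₂, p₃, hp'eq, hcolor₂, hhead₂, hccval₂⟩ |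
          ⟨z₂, h₂, p₃, hp'eq, hcolor₂, hinner⟩
        · have hqe : q'.edges = [] := List.length_eq_zero_iff.mp (by rw [Walk.length_edges, hq0])
          rw [hqe] at he
          simp at he
        · exfalso
          apply hpropContr h h₂ ?_ (hcolor.trans hcolor₂.symm)
          intro hEq
          apply hnotmem
          rw [hEq, hp'eq, Walk.edges_cons]
          exact List.mem_cons_self
        · rcases hinner with ⟨hq0, -⟩ | ⟨uu, zz, hhead₂, hccval₂⟩
          · have hqe : q'.edges = [] := List.length_eq_zero_iff.mp (by rw [Walk.length_edges, hq0])
            rw [hqe] at he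
            simp at he
          · rw [hhead₂] at he
            simp only [Option.mem_def, Option.some.injEq] at he
            subst he
            intro hEq
            have hcceq2 : cc s(u i, z i) = cc s(uu, zz) := by rw [hEq]
            rw [hccval, hccval₂] at hcceq2
            have hfeq : f (u j) = f (z₂ j) := sub_right_inj.mp hcceq2
            have hGj : G.Adj (z j) (z₂ j) := by
              rcases edec h₂ with ⟨-, -, -, hcol₂'⟩ | ⟨hGj, -, -, -⟩
              · exact absurd (congrArg Prod.fst (hcol₂'.symm.trans hcolor₂)) hijne
              · exact hGj
            exact hf _ _ hGj (hujz ▸ hfeq)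
      · -- type j edge
        have hui : u i = z i := hoth i hij.ne
        have hcoords : ∀ k, k ≠ i → k ≠ j → u k = w' k :=
          fun k hki hkj => (hoth k hkj).trans (hcoords' k hki hkj)
        have hshiftj : shiftSum f j u = shiftSum f j w' :=
          shiftSum_congr f fun k hk => hcoords k (hij.trans hk).ne' hk.ne'
        have hccb : cc s(u j, z j) = b - shiftSum f j w' := by
          have h1 := eq_sub_of_add_eq hcceq
          rw [h1, hshiftj]
        have hmemb : u j = v₀ ∨ u j = v₁ := by
          refine hclose (z j) (u j) hmemb' hGadj.symm ?_
          rw [Sym2.eq_swap]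
          exact hccb
        rcases htag' with ⟨hp0, hq0⟩ | ⟨z₂, h₂, p₃, hp'eq, hcolor₂, hhead₂, hccval₂⟩ |
          ⟨z₂, h₂, p₃, hp'eq, hcolor₂, hinner⟩
        · refine ⟨q'.copy hui.symm rfl, by rw [Walk.edges_copy]; exact hch', hcoords, hmemb,
            fun _ => by simp [hp0], Or.inr (Or.inr ⟨z, h, p', rfl, hcolor,
              Or.inl ⟨by simp [hq0], hp0⟩⟩)⟩
        · refine ⟨q'.copy hui.symm rfl, by rw [Walk.edges_copy]; exact hch', hcoords, hmemb,
            ?_, Or.inr (Or.inr ⟨z, h, p', rfl, hcolor,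
              Or.inr ⟨z i, z₂ i, by rw [Walk.edges_copy]; exact hhead₂, hccval₂⟩⟩)⟩
          intro hc
          rw [Walk.length_copy] at hc
          exfalso
          have hqe : q'.edges = [] := List.length_eq_zero_iff.mp (by rw [Walk.length_edges, hc])
          rw [hqe] at hhead₂
          simp at hhead₂
        · exfalso
          apply hpropContr h h₂ ?_ (hcolor.trans hcolor₂.symm)
          intro hEq
          apply hnotmem
          rw [hEq, hp'eq, Walk.edges_cons]
          exact List.mem_cons_self
  set S₀ : Fin Δ := ∑ k ∈ (Finset.univ.filter fun k => i < k).erase j, f (x₀ k) with hS₀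
  set bb : Fin Δ := b - shiftSum f j x₀ with hbb
  set vv₀ : α := x₀ j with hvv₀
  set vv₁ : α := if hx : ∃ z, G.Adj vv₀ z ∧ cc s(vv₀, z) = bb then hx.choose else vv₀ with hvv₁
  have hclose : ∀ z zz : α, (z = vv₀ ∨ z = vv₁) → G.Adj z zz →
      cc s(z, zz) = b - shiftSum f j x₀ → (zz = vv₀ ∨ zz = vv₁) := by
    intro z zz hz hadj hcz
    rw [← hbb] at hcz
    have hex : ∃ z', G.Adj vv₀ z' ∧ cc s(vv₀, z') = bb := by
      rcases hz with rfl | rfl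
      · exact ⟨zz, hadj, hcz⟩
      · by_cases hx : ∃ z', G.Adj vv₀ z' ∧ cc s(vv₀, z') = bb
        · exact hx
        · have hv10 : vv₁ = vv₀ := by rw [hvv₁, dif_neg hx]
          rw [hv10] at hadj hcz
          exact ⟨zz, hadj, hcz⟩
    have hv₁spec : G.Adj vv₀ vv₁ ∧ cc s(vv₀, vv₁) = bb := by
      rw [hvv₁, dif_pos hex]
      exact hex.choose_spec
    rcases hz with rfl | rfl
    · right
      exact proper_unique hcc.1 hadj hv₁spec.1 (hcz.trans hv₁spec.2.symm)
    · left
      have hadj' : G.Adj vv₁ vv₀ := hv₁spec.1.symm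
      have hcc' : cc s(vv₁, vv₀) = bb := by rw [Sym2.eq_swap]; exact hv₁spec.2
      exact proper_unique hcc.1 hadj hadj' (hcz.trans hcc'.symm)
  obtain ⟨q, hch, -, -, hlen0, -⟩ :=
    hrec S₀ vv₀ vv₁ p ⟨hp.edges_nodup⟩ hS₀ hvv₀ hclose
  have h0 := closed_chain_nil (hcc.2 _ _) q hch
  have h3 := hp.three_le_length
  have := hlen0 h0
  omega

end Mixed

section Assemble
variable {α : Type*} {d : ℕ} {Δ : ℕ} [NeZero Δ] [NeZero d]
variable {G : SimpleGraph α} {cc : Sym2 α → Fin Δ} {f : α → Fin Δ}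

lemma prodColor_acyclicColoring (hcc : IsAcyclicEdgeColoring G cc)
    (hf : ∀ x y, G.Adj x y → f x ≠ f y) :
    IsAcyclicEdgeColoring (piBoxProd (fun _ : Fin d => G)) (prodColor cc f) := by
  refine ⟨prodColor_proper hcc.1, ?_⟩
  rintro ⟨i, a⟩ ⟨j, b⟩
  rcases lt_trichotomy i j with h | h | h
  · exact mixed_acyclic hcc hf h a b
  · subst h
    exact sameCoord_acyclic hcc i a b
  · rw [twoColour_comm]
    exact mixed_acyclic hcc hf h b a

lemma lower_bound [Fintype α] (G : SimpleGraph α) [DecidableRel G.Adj] {n : ℕ}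
    {C : Sym2 (Fin d → α) → Fin n}
    (hC : IsAcyclicEdgeColoring (piBoxProd (fun _ : Fin d => G)) C) (v : α) :
    d * G.degree v ≤ n := by
  classical
  set x₀ : Fin d → α := fun _ => v with hx₀
  set F : Fin d × {u // u ∈ G.neighborFinset v} → Fin n :=
    fun p => C s(x₀, Function.update x₀ p.1 p.2.1) with hF
  have hadj : ∀ (i : Fin d) (u : {u // u ∈ G.neighborFinset v}),
      (piBoxProd (fun _ : Fin d => G)).Adj x₀ (Function.update x₀ i u.1) := by
    intro i u
    have hu : G.Adj v u.1 := (G.mem_neighborFinset v u.1).mp u.2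
    refine ⟨i, ?_, fun k hk => ?_⟩
    · rw [Function.update_self]
      exact hu
    · rw [Function.update_of_ne hk]
  have hne : ∀ (i : Fin d) (u : {u // u ∈ G.neighborFinset v}),
      Function.update x₀ i u.1 ≠ x₀ := by
    intro i u hEq
    have := congrFun hEq i
    rw [Function.update_self] at this
    exact ((G.mem_neighborFinset v u.1).mp u.2).ne' this
  have hinj : Function.Injective F := by
    rintro ⟨i, u⟩ ⟨i', u'⟩ hEq
    have hedge : s(x₀, Function.update x₀ i u.1) = s(x₀, Function.update x₀ i' u'.1) := by
      by_contra hc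
      exact hC.1 _ ((piBoxProd _).mem_edgeSet.mpr (hadj i u)) _
        ((piBoxProd _).mem_edgeSet.mpr (hadj i' u')) hc ⟨x₀, by simp, by simp⟩ hEq
    rw [Sym2.eq_iff] at hedge
    rcases hedge with ⟨-, h2⟩ | ⟨h1, -⟩
    · by_cases hii : i = i'
      · subst hii
        have := congrFun h2 i
        rw [Function.update_self, Function.update_self] at this
        exact Prod.ext rfl (Subtype.ext this)
      · exfalso
        have := congrFun h2 i
        rw [Function.update_self, Function.update_of_ne hii] at this
        exact ((G.mem_neighborFinset v u.1).mp u.2).ne' this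
    · exact absurd h1.symm (hne i' u')
  have hcard := Fintype.card_le_of_injective F hinj
  rwa [Fintype.card_prod, Fintype.card_fin, Fintype.card_coe,
    G.card_neighborFinset_eq_degree, Fintype.card_fin] at hcard

end Assemble


/-- For a connected nontrivial finite graph `G` with `a'(G) = Δ(G) > 1`,
the `d`-fold cartesian power `G^d` satisfies `a'(G^d) = d · Δ(G)` for all `d ≥ 1`. -/
theorem acyclicChromaticIndex_boxPower {α : Type*} [Fintype α] [Nontrivial α]
    (G : SimpleGraph α) [DecidableRel G.Adj] (hconn : G.Connected)
    (heq : acyclicChromaticIndex G = G.maxDegree) (hgt : 1 < G.maxDegree)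
    (d : ℕ) (hd : 1 ≤ d) :
    acyclicChromaticIndex (piBoxProd (fun _ : Fin d => G)) = d * G.maxDegree := by
  classical
  have hΔpos : 0 < G.maxDegree := lt_trans one_pos hgt
  haveI : NeZero G.maxDegree := ⟨hΔpos.ne'⟩
  haveI : NeZero d := ⟨by omega⟩
  have hne : {n | ∃ c : Sym2 α → Fin n, IsAcyclicEdgeColoring G c}.Nonempty :=
    ⟨_, exists_injective_acyclic G⟩
  have hmem := Nat.sInf_mem hne
  rw [show sInf {n | ∃ c : Sym2 α → Fin n, IsAcyclicEdgeColoring G c}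
      = acyclicChromaticIndex G from rfl, heq] at hmem
  obtain ⟨cc, hcc⟩ := hmem
  obtain ⟨f, hf⟩ := exists_proper_vertex_coloring G hconn hcc hgt
  have hupper : d * G.maxDegree ∈ {n | ∃ c : Sym2 (Fin d → α) → Fin n,
      IsAcyclicEdgeColoring (piBoxProd (fun _ : Fin d => G)) c} := by
    have hac := prodColor_acyclicColoring (d := d) hcc hf
    exact ⟨(finProdFinEquiv : Fin d × Fin G.maxDegree ≃ Fin (d * G.maxDegree)) ∘ prodColor cc f,
      hac.comp finProdFinEquiv.injective⟩
  obtain ⟨v, hv⟩ := G.exists_maximal_degree_vertex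
  have hlower : ∀ n ∈ {n | ∃ c : Sym2 (Fin d → α) → Fin n,
      IsAcyclicEdgeColoring (piBoxProd (fun _ : Fin d => G)) c}, d * G.maxDegree ≤ n := by
    rintro n ⟨C, hC⟩
    rw [hv]
    exact lower_bound G hC v
  exact le_antisymm (Nat.sInf_le hupper) (le_csInf ⟨_, hupper⟩ hlower)
end

section
/- The acyclic chromatic index of the d-dimensional hypercube Q_d = K_2^d equals d+1 for all d ≥ 2, and equals 1 for d = 1. -/
open SimpleGraph


namespace AEC
variable {V : Type*} {G : SimpleGraph V}

lemma periodic_mod {α : Type*} {f : ℕ → α} {n : ℕ} (hn : 0 < n)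
    (h : ∀ k, f (k + n) = f k) : ∀ k, f (k % n) = f k := by
  intro k
  induction k using Nat.strong_induction_on with
  | _ k ih =>
    by_cases hk : k < n
    · rw [Nat.mod_eq_of_lt hk]
    · push_neg at hk
      have h1 : k % n = (k - n) % n := by
        conv_lhs => rw [← Nat.sub_add_cancel hk]
        rw [Nat.add_mod_right]
      have h2 : f k = f (k - n) := by
        conv_lhs => rw [← Nat.sub_add_cancel hk]
        exact h _
      rw [h1, h2]
      exact ih _ (by omega)

/-- A cyclic sequence of distinct, consecutively adjacent vertices. -/
def SeqCyc (G : SimpleGraph V) : Prop :=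
  ∃ (n : ℕ) (f : ℕ → V), 3 ≤ n ∧ (∀ k, f (k + n) = f k) ∧
    (∀ k l, k < n → l < n → f k = f l → k = l) ∧ (∀ k, G.Adj (f k) (f (k + 1)))

lemma seqcyc_mod_inj {n : ℕ} {f : ℕ → V} (hn : 0 < n) (hper : ∀ k, f (k + n) = f k)
    (hinj : ∀ k l, k < n → l < n → f k = f l → k = l) :
    ∀ k l, f k = f l → k % n = l % n := by
  intro k l hkl
  exact hinj _ _ (Nat.mod_lt _ hn) (Nat.mod_lt _ hn)
    (by rw [periodic_mod hn hper, periodic_mod hn hper]; exact hkl)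

/-- Build a walk following `f` from index `k`, of length `m`. -/
def walkOf (f : ℕ → V) (hadj : ∀ k, G.Adj (f k) (f (k + 1))) :
    (k m : ℕ) → G.Walk (f k) (f (k + m))
  | _, 0 => Walk.nil
  | k, m + 1 =>
    Walk.cons (hadj k) ((walkOf f hadj (k + 1) m).copy rfl (by congr 1; omega))

lemma walkOf_length (f : ℕ → V) (hadj : ∀ k, G.Adj (f k) (f (k + 1))) :
    ∀ k m, (walkOf f hadj k m).length = m
  | _, 0 => rfl
  | k, m + 1 => by
    simp [walkOf, walkOf_length f hadj (k + 1) m]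

lemma walkOf_support (f : ℕ → V) (hadj : ∀ k, G.Adj (f k) (f (k + 1))) :
    ∀ k m, (walkOf f hadj k m).support = (List.range (m + 1)).map (fun j => f (k + j))
  | k, 0 => by simp [walkOf, List.range_succ]
  | k, m + 1 => by
    rw [walkOf]
    rw [Walk.support_cons, Walk.support_copy,
      walkOf_support f hadj (k + 1) m, List.range_succ_eq_map (n := m+1)]
    simp only [List.map_cons, List.map_map]
    congr 1
    apply List.map_congr_left
    intro j _
    simp only [Function.comp_apply]
    congr 1
    omega

lemma walkOf_edges (f : ℕ → V) (hadj : ∀ k, G.Adj (f k) (f (k + 1))) :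
    ∀ k m, (walkOf f hadj k m).edges = (List.range m).map (fun j => s(f (k + j), f (k + j + 1)))
  | k, 0 => by simp [walkOf]
  | k, m + 1 => by
    rw [walkOf]
    rw [Walk.edges_cons, Walk.edges_copy, walkOf_edges f hadj (k + 1) m,
      List.range_succ_eq_map (n := m)]
    simp only [List.map_cons, List.map_map, Nat.add_zero]
    congr 1
    apply List.map_congr_left
    intro j _
    simp only [Function.comp_apply]
    have h1 : k + 1 + j = k + (j + 1) := by omega
    rw [h1]

lemma SeqCyc.not_isAcyclic (h : SeqCyc G) : ¬ G.IsAcyclic := by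
  obtain ⟨n, f, hn3, hper, hinj, hadj⟩ := h
  have hn : 0 < n := by omega
  have hmodinj := seqcyc_mod_inj hn hper hinj
  intro hac
  have hcopy : f (0 + n) = f 0 := hper 0
  set p : G.Walk (f 0) (f 0) := (walkOf f hadj 0 n).copy rfl hcopy with hp
  apply hac p
  constructor
  · constructor
    · -- IsTrail : edges nodup
      constructor
      rw [hp, Walk.edges_copy, walkOf_edges]
      rw [List.nodup_map_iff_inj_on (List.nodup_range (n := n))]
      intro i hi j hj hij
      simp only [List.mem_range] at hi hj
      simp only [zero_add] at hij
      rw [Sym2.eq_iff] at hij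
      rcases hij with ⟨h1, _h2⟩ | ⟨h1, h2⟩
      · have := hmodinj _ _ h1
        rwa [Nat.mod_eq_of_lt hi, Nat.mod_eq_of_lt hj] at this
      · -- f i = f (j+1), f (i+1) = f j
        exfalso
        have e1 : i % n = (j + 1) % n := hmodinj _ _ h1
        have e2 : (i + 1) % n = j % n := hmodinj _ _ h2
        have m1 : i ≡ j + 1 [MOD n] := e1
        have m2 : i + 1 ≡ j [MOD n] := e2
        have m3 : i + (i + 1) ≡ (j + 1) + j [MOD n] := m1.add m2
        have m4 : i + i + 1 ≡ j + j + 1 [MOD n] := by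
          have : i + (i+1) = i + i + 1 := by omega
          have h' : (j+1) + j = j + j + 1 := by omega
          rwa [this, h'] at m3
        have m5 : i + i ≡ j + j [MOD n] := Nat.ModEq.add_right_cancel' 1 m4
        have m6 : i + j ≡ (j + 1) + (i + 1) [MOD n] := m1.add m2.symm
        have m7 : i + j + 0 ≡ i + j + 2 [MOD n] := by
          have : (j + 1) + (i + 1) = i + j + 2 := by omega
          rw [this] at m6
          simpa using m6
        have m8 : 0 ≡ 2 [MOD n] := Nat.ModEq.add_left_cancel' _ m7
        have : n ∣ 2 := (Nat.modEq_zero_iff_dvd).mp m8.symm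
        have := Nat.le_of_dvd (by norm_num) this
        omega
    · -- p ≠ nil
      intro hnil
      have : p.length = 0 := by rw [hnil]; rfl
      rw [hp, Walk.length_copy, walkOf_length] at this
      omega
  · -- support tail nodup
    rw [hp, Walk.support_copy, walkOf_support]
    rw [List.range_succ_eq_map (n := n)]
    simp only [List.map_cons, List.tail_cons, List.map_map]
    rw [List.nodup_map_iff_inj_on (List.nodup_range (n := n))]
    intro i hi j hj hij
    simp only [List.mem_range] at hi hj
    simp only [Function.comp_apply, zero_add] at hij
    have hs := hmodinj _ _ hij
    simp only [Nat.succ_eq_add_one] at hs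
    rcases Nat.lt_or_ge (i+1) n with h1 | h1 <;> rcases Nat.lt_or_ge (j+1) n with h2 | h2
    · rw [Nat.mod_eq_of_lt h1, Nat.mod_eq_of_lt h2] at hs; omega
    · have hj1 : j + 1 = n := by omega
      rw [Nat.mod_eq_of_lt h1, hj1, Nat.mod_self] at hs; omega
    · have hi1 : i + 1 = n := by omega
      rw [hi1, Nat.mod_self, Nat.mod_eq_of_lt h2] at hs; omega
    · omega

lemma getVert_eq_support_getElem {u v : V} (p : G.Walk u v) :
    ∀ (k : ℕ) (hk : k < p.support.length), p.getVert k = p.support[k] := by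
  induction p with
  | nil => intro k hk; simp [Walk.support_nil] at hk; subst hk; simp
  | cons h q ih =>
    intro k hk
    cases k with
    | zero => simp
    | succ k =>
      rw [Walk.getVert_cons_succ]
      simp only [Walk.support_cons, List.getElem_cons_succ]
      exact ih k (by simpa [Walk.support_cons] using hk)

lemma cycle_getVert_inj {u : V} {p : G.Walk u u} (hp : p.IsCycle)
    {k l : ℕ} (hk : k < p.length) (hl : l < p.length) (h : p.getVert k = p.getVert l) :
    k = l := by
  have hlen : p.support.length = p.length + 1 := by rw [Walk.length_support]
  have htail : p.support.tail.Nodup := hp.support_nodup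
  have htlen : p.support.tail.length = p.length := by rw [List.length_tail, hlen]; omega
  have hget : ∀ (m : ℕ) (hm : m < p.length), p.support[m + 1]'(by omega) =
      p.support.tail[m]'(by omega) := by
    intro m hm
    rw [List.getElem_tail]
  have hmid : ∀ (m : ℕ) (hm0 : 0 < m) (hm : m < p.length),
      p.support[m]'(by omega) = p.support.tail[m - 1]'(by omega) := by
    intro m hm0 hm
    have h2 := hget (m - 1) (by omega)
    convert h2 using 2 <;> omega
  have hlast : p.support.tail[p.length - 1]'(by omega) = u := by
    have h3 := hget (p.length - 1) (by have := hp.three_le_length; omega)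
    have h4 : p.support[p.length - 1 + 1]'(by omega) = u := by
      have h5 : p.length - 1 + 1 = p.length := by have := hp.three_le_length; omega
      rw [← getVert_eq_support_getElem p (p.length - 1 + 1) (by omega)]
      rw [h5, Walk.getVert_length]
    rw [← h3, h4]
  have key : ∀ k l : ℕ, k < l → l < p.length → p.getVert k ≠ p.getVert l := by
    intro k l hkl hl' hKL
    rw [getVert_eq_support_getElem p k (by omega),
        getVert_eq_support_getElem p l (by omega)] at hKL
    rcases Nat.eq_zero_or_pos k with rfl | hk0
    · have h0 : p.support[0]'(by omega) = u := by
        rw [← getVert_eq_support_getElem p 0 (by omega), Walk.getVert_zero]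
      have heq : p.support.tail[p.length - 1]'(by omega) =
          p.support.tail[l - 1]'(by omega) :=
        hlast.trans (h0.symm.trans (hKL.trans (hmid l (by omega) hl')))
      have := (List.Nodup.getElem_inj_iff htail).mp heq
      omega
    · have heq : p.support.tail[k - 1]'(by omega) =
          p.support.tail[l - 1]'(by omega) :=
        (hmid k hk0 (by omega)).symm.trans (hKL.trans (hmid l (by omega) hl'))
      have := (List.Nodup.getElem_inj_iff htail).mp heq
      omega
  by_contra hne
  rcases Nat.lt_or_ge k l with h1 | h1
  · exact key k l h1 hl h
  · exact key l k (by omega) hk h.symm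

/-- From a cycle walk, extract a cyclic sequence. -/
lemma seqCyc_of_cycle {u : V} {p : G.Walk u u} (hp : p.IsCycle) : SeqCyc G := by
  set n := p.length with hn
  have hn3 : 3 ≤ n := hp.three_le_length
  have hn0 : 0 < n := by omega
  refine ⟨n, fun k => p.getVert (k % n), hn3, ?_, ?_, ?_⟩
  · intro k; simp [Nat.add_mod_right]
  · intro k l hk hl h
    dsimp only at h
    rw [Nat.mod_eq_of_lt hk, Nat.mod_eq_of_lt hl] at h
    exact cycle_getVert_inj hp hk hl h
  · intro k
    dsimp only
    set r := k % n with hr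
    have hrn : r < n := Nat.mod_lt _ hn0
    have h1 : (k + 1) % n = (r + 1) % n := (Nat.mod_add_mod k n 1).symm
    rcases Nat.lt_or_ge (r + 1) n with h2 | h2
    · rw [h1, Nat.mod_eq_of_lt h2]
      exact p.adj_getVert_succ hrn
    · have hr1 : r + 1 = n := by omega
      rw [h1, hr1, Nat.mod_self]
      have hadj := p.adj_getVert_succ (i := n - 1) (by omega)
      have he : n - 1 + 1 = n := by omega
      rw [he] at hadj
      have hr' : r = n - 1 := by omega
      rw [hr']
      have hnu : p.getVert n = u := by rw [hn]; exact p.getVert_length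
      rw [hnu] at hadj
      simpa using hadj

/-- A non-backtracking infinite walk in a finite graph yields a cyclic sequence. -/
lemma seqCyc_of_nonbacktracking [Finite V] (g : ℕ → V)
    (hadj : ∀ k, G.Adj (g k) (g (k + 1))) (hnb : ∀ k, g (k + 2) ≠ g k) : SeqCyc G := by
  classical
  have hrep : ∃ m, 0 < m ∧ ∃ i, g (i + m) = g i := by
    obtain ⟨x, y, hxy, hg⟩ := Finite.exists_ne_map_eq_of_infinite g
    rcases Nat.lt_or_ge x y with h | h
    · exact ⟨y - x, by omega, x, by rw [Nat.add_sub_cancel' (by omega)]; exact hg.symm⟩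
    · have : y < x := by omega
      exact ⟨x - y, by omega, y, by rw [Nat.add_sub_cancel' (by omega)]; exact hg⟩
  have hSne : {m | 0 < m ∧ ∃ i, g (i + m) = g i}.Nonempty := hrep
  set n := sInf {m | 0 < m ∧ ∃ i, g (i + m) = g i} with hn
  have hmem := Nat.sInf_mem hSne
  rw [← hn] at hmem
  obtain ⟨hn0, i0, hi0⟩ := hmem
  have hn1 : n ≠ 1 := by
    intro h
    rw [h] at hi0
    exact (G.loopless.irrefl _) (hi0 ▸ hadj i0)
  have hn2 : n ≠ 2 := by
    intro h
    rw [h] at hi0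
    exact hnb i0 hi0
  have hn3 : 3 ≤ n := by omega
  have hmin : ∀ m, 0 < m → m < n → ∀ i, g (i + m) ≠ g i := by
    intro m hm0 hmn i hgi
    have : m ∈ {m | 0 < m ∧ ∃ i, g (i + m) = g i} := ⟨hm0, i, hgi⟩
    have := Nat.sInf_le this
    omega
  refine ⟨n, fun k => g (i0 + k % n), hn3, ?_, ?_, ?_⟩
  · intro k; simp [Nat.add_mod_right]
  · intro k l hk hl h
    dsimp only at h
    rw [Nat.mod_eq_of_lt hk, Nat.mod_eq_of_lt hl] at h
    by_contra hne
    rcases Nat.lt_or_ge k l with h1 | h1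
    · exact hmin (l - k) (by omega) (by omega) (i0 + k)
        (by rw [show i0 + k + (l - k) = i0 + l by omega]; exact h.symm)
    · exact hmin (k - l) (by omega) (by omega) (i0 + l)
        (by rw [show i0 + l + (k - l) = i0 + k by omega]; exact h)
  · intro k
    dsimp only
    set r := k % n with hr
    have hrn : r < n := Nat.mod_lt _ (by omega)
    have h1 : (k + 1) % n = (r + 1) % n := (Nat.mod_add_mod k n 1).symm
    rcases Nat.lt_or_ge (r + 1) n with h2 | h2
    · rw [h1, Nat.mod_eq_of_lt h2]
      rw [show i0 + (r + 1) = i0 + r + 1 by omega]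
      exact hadj _
    · have hr1 : r + 1 = n := by omega
      rw [h1, hr1, Nat.mod_self]
      have hstep := hadj (i0 + r)
      rw [show i0 + r + 1 = i0 + n by omega, hi0] at hstep
      simpa using hstep

section Hypercube

/-- Vertices of the `d`-cube. -/
abbrev HV (d : ℕ) := Fin d → Fin 2

/-- The `d`-dimensional hypercube. -/
abbrev Q (d : ℕ) : SimpleGraph (HV d) :=
  piBoxProd (fun _ : Fin d => (⊤ : SimpleGraph (Fin 2)))

/-- `x` and `y` differ exactly at coordinate `i`. -/
def DiffAt {d : ℕ} (x y : HV d) (i : Fin d) : Prop :=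
  x i ≠ y i ∧ ∀ j, j ≠ i → x j = y j

lemma Q_adj {d : ℕ} {x y : HV d} : (Q d).Adj x y ↔ ∃ i, DiffAt x y i := by
  show (∃ i, (⊤ : SimpleGraph (Fin 2)).Adj (x i) (y i) ∧ ∀ j, j ≠ i → x j = y j) ↔ _
  simp only [top_adj]
  rfl

lemma DiffAt.symm {d : ℕ} {x y : HV d} {i : Fin d} (h : DiffAt x y i) : DiffAt y x i :=
  ⟨h.1.symm, fun j hj => (h.2 j hj).symm⟩

lemma fin2_aux : ∀ x y z : Fin 2, x ≠ z → y ≠ z → x = y := by decide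

lemma DiffAt.unique {d : ℕ} {x y z : HV d} {i : Fin d}
    (h1 : DiffAt x y i) (h2 : DiffAt x z i) : y = z := by
  funext j
  by_cases hj : j = i
  · subst hj; exact fin2_aux _ _ _ h1.1.symm h2.1.symm
  · rw [← h1.2 j hj, h2.2 j hj]

lemma DiffAt.index_unique {d : ℕ} {x y : HV d} {i i' : Fin d}
    (h1 : DiffAt x y i) (h2 : DiffAt x y i') : i = i' := by
  by_contra hne
  exact (h2.1) (h1.2 i' (Ne.symm hne))

/-- The recursive colour function. `colN d x i` is the colour of the edge in
direction `i` at a vertex with coordinates `x` (only coordinates strictly between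
`i` and `d` matter). -/
def colN : ℕ → (ℕ → ℕ) → ℕ → ℕ
  | 0, _, _ => 0
  | d + 1, x, i => if i = d then d + 1 else (colN d x i + x d) % (d + 1)

lemma colN_congr : ∀ (d : ℕ) (u u' : ℕ → ℕ) (i : ℕ), i < d →
    (∀ m, i < m → m < d → u m = u' m) → colN d u i = colN d u' i := by
  intro d
  induction d with
  | zero => intro u u' i hi; omega
  | succ d ih =>
    intro u u' i hi hm
    by_cases hid : i = d
    · simp [colN, hid]
    · rw [colN, colN, if_neg hid, if_neg hid,
        ih u u' i (by omega) (fun m h1 h2 => hm m h1 (by omega)),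
        hm d (by omega) (by omega)]

lemma colN_le : ∀ (d : ℕ) (u : ℕ → ℕ) (i : ℕ), i < d → colN d u i ≤ d := by
  intro d
  induction d with
  | zero => intro u i hi; omega
  | succ d ih =>
    intro u i hi
    by_cases hid : i = d
    · simp [colN, hid]
    · rw [colN, if_neg hid]
      have := Nat.mod_lt (colN d u i + u d) (y := d + 1) (by omega)
      omega

lemma colN_ne : ∀ (d : ℕ) (u : ℕ → ℕ) (i j : ℕ), i < j → j < d →
    colN d u i ≠ colN d u j := by
  intro d
  induction d with
  | zero => intro u i j hij hj; omega
  | succ d ih =>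
    intro u i j hij hj
    by_cases hjd : j = d
    · rw [colN, colN, if_neg (by omega), if_pos hjd]
      have := Nat.mod_lt (colN d u i + u d) (y := d + 1) (by omega)
      omega
    · have hid : i ≠ d := by omega
      rw [colN, colN, if_neg hid, if_neg hjd]
      intro h
      have h1 : colN d u i % (d+1) = colN d u j % (d+1) :=
        Nat.ModEq.add_right_cancel' (u d) h
      rw [Nat.mod_eq_of_lt (by have := colN_le d u i (by omega); omega),
        Nat.mod_eq_of_lt (by have := colN_le d u j (by omega); omega)] at h1
      exact ih u i j hij (by omega) h1

/-- Extend a cube vertex to a function `ℕ → ℕ`. -/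
def extHV {d : ℕ} (x : HV d) : ℕ → ℕ := fun m => if h : m < d then (x ⟨m, h⟩ : ℕ) else 0

/-- The edge colouring of `Q d`, as a function on all of `Sym2`. -/
def colS (d : ℕ) : Sym2 (HV d) → ℕ :=
  Sym2.lift ⟨fun x y =>
      colN d (fun m => if h : m < d then max (x ⟨m, h⟩ : ℕ) (y ⟨m, h⟩ : ℕ) else 0)
        (∑ j : Fin d, if x j ≠ y j then (j : ℕ) else 0),
    by
      intro x y
      have h1 : (fun m => if h : m < d then max (x ⟨m,h⟩ : ℕ) (y ⟨m,h⟩ : ℕ) else 0)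
          = (fun m => if h : m < d then max (y ⟨m,h⟩ : ℕ) (x ⟨m,h⟩ : ℕ) else 0) := by
        funext m
        by_cases h : m < d
        · simp only [dif_pos h]; exact max_comm _ _
        · simp only [dif_neg h]
      have h2 : (∑ j : Fin d, if x j ≠ y j then (j : ℕ) else 0)
          = (∑ j : Fin d, if y j ≠ x j then (j : ℕ) else 0) :=
        Finset.sum_congr rfl (fun j _ => if_congr ne_comm rfl rfl)
      dsimp only
      rw [h1, h2]⟩

lemma colS_eq {d : ℕ} {x y : HV d} {i : Fin d} (h : DiffAt x y i) :
    colS d s(x, y) = colN d (extHV x) i := by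
  have hsum : (∑ j : Fin d, if x j ≠ y j then (j : ℕ) else 0) = i := by
    rw [Finset.sum_eq_single i]
    · exact if_pos h.1
    · intro j _ hji
      exact if_neg (by simp [h.2 j hji])
    · intro hi; exact absurd (Finset.mem_univ i) hi
  show colN d _ _ = _
  rw [hsum]
  apply colN_congr d _ _ i i.isLt
  intro m h1 h2
  have hmi : (⟨m, h2⟩ : Fin d) ≠ i := by
    intro he
    have : m = (i : ℕ) := by rw [← he]
    omega
  simp only [dif_pos h2, extHV]
  rw [h.2 ⟨m, h2⟩ hmi, max_self]

lemma colS_le {d : ℕ} {x y : HV d} {i : Fin d} (h : DiffAt x y i) :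
    colS d s(x, y) ≤ d := by
  rw [colS_eq h]; exact colN_le d _ i i.isLt

/-- Properness: two distinct edges at a common vertex get different colours. -/
lemma colS_ne_at {d : ℕ} {x y z : HV d} {i j : Fin d}
    (h1 : DiffAt x y i) (h2 : DiffAt x z j) (hij : i ≠ j) :
    colS d s(x, y) ≠ colS d s(x, z) := by
  rw [colS_eq h1, colS_eq h2]
  rcases Nat.lt_or_ge (i : ℕ) (j : ℕ) with h | h
  · exact colN_ne d _ i j h j.isLt
  · have : (j : ℕ) < (i : ℕ) := by
      rcases Nat.lt_or_ge (j : ℕ) (i : ℕ) with h' | h'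
      · exact h'
      · exact absurd (Fin.ext (by omega)) hij
    exact (colN_ne d _ j i this i.isLt).symm

lemma eq_of_init_last {d : ℕ} {x y : HV (d + 1)} (h1 : Fin.init x = Fin.init y)
    (h2 : x (Fin.last d) = y (Fin.last d)) : x = y := by
  rw [← Fin.snoc_init_self x, ← Fin.snoc_init_self y, h1, h2]

lemma colS_last {d : ℕ} {x y : HV (d + 1)} (h : DiffAt x y (Fin.last d)) :
    colS (d + 1) s(x, y) = d + 1 := by
  rw [colS_eq h]
  show colN (d + 1) _ (Fin.last d : ℕ) = d + 1
  simp [colN, Fin.val_last]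

/-- Projection of a non-top edge to the lower-dimensional cube. -/
lemma step_down {d : ℕ} {x y : HV (d + 1)} {i : Fin (d + 1)} (h : DiffAt x y i)
    (hil : i ≠ Fin.last d) :
    ∃ i' : Fin d, DiffAt (Fin.init x) (Fin.init y) i' ∧
      colS (d + 1) s(x, y) =
        (colS d s(Fin.init x, Fin.init y) + (x (Fin.last d) : ℕ)) % (d + 1) := by
  set i' := i.castPred hil with hi'
  have hcs : i'.castSucc = i := Fin.castSucc_castPred i hil
  have hd1 : DiffAt (Fin.init x) (Fin.init y) i' := by
    constructor
    · show x i'.castSucc ≠ y i'.castSucc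
      rw [hcs]; exact h.1
    · intro j hj
      show x j.castSucc = y j.castSucc
      apply h.2
      rw [← hcs]
      exact fun hc => hj (Fin.castSucc_injective d hc)
  refine ⟨i', hd1, ?_⟩
  rw [colS_eq h, colS_eq hd1]
  have hvd : (i : ℕ) ≠ d := by
    intro hc
    exact hil (Fin.ext (by rw [hc, Fin.val_last]))
  have hvi : (i' : ℕ) = (i : ℕ) := by rw [← hcs, Fin.coe_castSucc]
  show colN (d + 1) (extHV x) i = _
  rw [colN, if_neg hvd]
  have hxd : extHV x d = (x (Fin.last d) : ℕ) := by
    simp only [extHV, dif_pos (by omega : d < d + 1)]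
    rfl
  rw [hxd]
  congr 2
  rw [← hvi]
  apply colN_congr d _ _ i' (by omega : (i' : ℕ) < d)
  intro m h1 h2
  simp only [extHV, dif_pos h2, dif_pos (by omega : m < d + 1)]
  show (x ⟨m, _⟩ : ℕ) = ((Fin.init x) ⟨m, h2⟩ : ℕ)
  congr 1

end Hypercube

lemma unshift {D κ s a : ℕ} (hs : s ≤ D) (hκ : κ < D) (h : (κ + s) % D = a) :
    κ = (a % D + D - s) % D := by
  subst h
  rw [Nat.mod_mod_of_dvd _ dvd_rfl]
  rw [show (κ + s) % D + D - s = (κ + s) % D + (D - s) from by omega]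
  rw [Nat.mod_add_mod]
  rw [show κ + s + (D - s) = κ + D from by omega]
  rw [Nat.add_mod_right, Nat.mod_eq_of_lt hκ]

lemma shift_ne {D c : ℕ} (hD : 2 ≤ D) (hc : c < D) :
    (c + D) % D ≠ (c + D - 1) % D := by
  rw [Nat.add_mod_right, Nat.mod_eq_of_lt hc]
  rcases Nat.eq_zero_or_pos c with rfl | hc0
  · rw [show 0 + D - 1 = D - 1 from by omega, Nat.mod_eq_of_lt (by omega)]
    omega
  · rw [show c + D - 1 = (c - 1) + D from by omega, Nat.add_mod_right,
      Nat.mod_eq_of_lt (by omega)]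
    omega

/-- The key theorem: the colouring `colS` is acyclic on the hypercube. -/
theorem noSeq : ∀ (d : ℕ) (a b : ℕ),
    ¬ SeqCyc (twoColourSubgraph (Q d) (colS d) a b) := by
  intro d
  induction d with
  | zero =>
    rintro a b ⟨n, f, hn3, hper, hinj, hadj⟩
    obtain ⟨i, -⟩ := Q_adj.mp (hadj 0).1
    exact i.elim0
  | succ d IH =>
    rintro a b ⟨n, f, hn3, hper, hinj, hadj⟩
    have hn0 : 0 < n := by omega
    have hmodinj := seqcyc_mod_inj hn0 hper hinj
    have hne2 : ∀ k, f (k + 2) ≠ f k := by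
      intro k h
      have h1 := hmodinj _ _ h
      have h2 : (2 + k) % n = (0 + k) % n := by
        rw [show 2 + k = k + 2 from by omega, show 0 + k = k from by omega]
        exact h1
      have h3 : (2 : ℕ) ≡ 0 [MOD n] := Nat.ModEq.add_right_cancel' k h2
      have h4 : n ∣ 2 := Nat.modEq_zero_iff_dvd.mp h3
      have := Nat.le_of_dvd (by norm_num) h4
      omega
    have hQadj : ∀ k, (Q (d + 1)).Adj (f k) (f (k + 1)) := fun k => (hadj k).1
    have hcol : ∀ k, colS (d + 1) s(f k, f (k + 1)) = a ∨
        colS (d + 1) s(f k, f (k + 1)) = b := fun k => (hadj k).2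
    choose iDir hDiff using fun k => Q_adj.mp (hQadj k)
    by_cases hEx : ∃ k, f k (Fin.last d) ≠ f (k + 1) (Fin.last d)
    case neg =>
      -- Case A : no top-direction edges; project everything down.
      have hA : ∀ k, f k (Fin.last d) = f (k + 1) (Fin.last d) :=
        fun k => not_not.mp (fun h => hEx ⟨k, h⟩)
      have hconst : ∀ k, f k (Fin.last d) = f 0 (Fin.last d) := by
        intro k
        induction k with
        | zero => rfl
        | succ k ih => rw [← hA k]; exact ih
      set t : ℕ := (f 0 (Fin.last d) : ℕ) with ht
      apply IH ((a % (d + 1) + (d + 1) - t) % (d + 1)) ((b % (d + 1) + (d + 1) - t) % (d + 1))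
      refine ⟨n, fun k => Fin.init (f k), hn3,
        fun k => congrArg Fin.init (hper k), ?_, ?_⟩
      · intro k l hk hl h
        dsimp only at h
        exact hinj k l hk hl (eq_of_init_last h (by rw [hconst k, hconst l]))
      · intro k
        dsimp only
        have hil : iDir k ≠ Fin.last d := fun hc => (hc ▸ (hDiff k).1) (hA k)
        obtain ⟨i', hd', hcolf⟩ := step_down (hDiff k) hil
        have hle : colS d s(Fin.init (f k), Fin.init (f (k + 1))) ≤ d := colS_le hd'
        have htv : (f k (Fin.last d) : ℕ) = t := by rw [ht]; exact congrArg _ (hconst k)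
        have htle := (f 0 (Fin.last d)).isLt
        refine ⟨Q_adj.mpr ⟨i', hd'⟩, ?_⟩
        rcases hcol k with hc | hc
        · left
          rw [hcolf, htv] at hc
          exact unshift (by omega) (by omega) hc
        · right
          rw [hcolf, htv] at hc
          exact unshift (by omega) (by omega) hc
    case pos =>
      -- Case B : there is a top-direction (matching) edge.
      obtain ⟨k0, hk0⟩ := hEx
      have hMeq : ∀ k, f k (Fin.last d) ≠ f (k + 1) (Fin.last d) →
          DiffAt (f k) (f (k + 1)) (Fin.last d) := by
        intro k hp
        have hil : iDir k = Fin.last d := by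
          by_contra hc
          exact hp ((hDiff k).2 (Fin.last d) (Ne.symm hc))
        exact hil ▸ hDiff k
      have hMcol : ∀ k, f k (Fin.last d) ≠ f (k + 1) (Fin.last d) →
          colS (d + 1) s(f k, f (k + 1)) = d + 1 := fun k hp => colS_last (hMeq k hp)
      have hab : d + 1 = a ∨ d + 1 = b := by
        rcases hcol k0 with h | h
        · left; rw [← h, hMcol k0 hk0]
        · right; rw [← h, hMcol k0 hk0]
      have hnonMle : ∀ k, f k (Fin.last d) = f (k + 1) (Fin.last d) →
          colS (d + 1) s(f k, f (k + 1)) ≤ d := by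
        intro k hnp
        have hil : iDir k ≠ Fin.last d := fun hc => (hc ▸ (hDiff k).1) hnp
        obtain ⟨i', hd', hcolf⟩ := step_down (hDiff k) hil
        rw [hcolf]
        have := Nat.mod_lt (colS d s(Fin.init (f k), Fin.init (f (k + 1))) +
          (f k (Fin.last d) : ℕ)) (y := d + 1) (by omega)
        omega
      have noPP : ∀ k, f k (Fin.last d) ≠ f (k + 1) (Fin.last d) →
          f (k + 1) (Fin.last d) ≠ f (k + 2) (Fin.last d) → False := by
        intro k h1 h2
        have e1 : DiffAt (f (k + 1)) (f k) (Fin.last d) := (hMeq k h1).symm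
        have e2 : DiffAt (f (k + 1)) (f (k + 2)) (Fin.last d) := hMeq (k + 1) h2
        exact hne2 k (e1.unique e2).symm
      have noNN : ∀ k, f k (Fin.last d) = f (k + 1) (Fin.last d) →
          f (k + 1) (Fin.last d) = f (k + 2) (Fin.last d) → False := by
        intro k h1 h2
        have e1 : DiffAt (f (k + 1)) (f k) (iDir k) := (hDiff k).symm
        have e2 : DiffAt (f (k + 1)) (f (k + 2)) (iDir (k + 1)) := hDiff (k + 1)
        by_cases hii : iDir k = iDir (k + 1)
        · exact hne2 k (((hii ▸ e1).unique e2).symm)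
        · have hcne : colS (d + 1) s(f (k + 1), f k) ≠
              colS (d + 1) s(f (k + 1), f (k + 2)) := colS_ne_at e1 e2 hii
          rw [Sym2.eq_swap] at hcne
          have c1 := hcol k
          have c2 := hcol (k + 1)
          have l1 := hnonMle k h1
          have l2 := hnonMle (k + 1) h2
          rcases c1 with hC1 | hC1 <;> rcases c2 with hC2 | hC2 <;>
            first
              | exact hcne (hC1.trans hC2.symm)
              | (rcases hab with hA1 | hA1 <;> omega)
      -- parity of the matching edges
      have halt : ∀ k, f k (Fin.last d) = f (k + 1) (Fin.last d) →
          f (k + 1) (Fin.last d) ≠ f (k + 2) (Fin.last d) :=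
        fun k h1 h2 => noNN k h1 h2
      have halt2 : ∀ k, f k (Fin.last d) ≠ f (k + 1) (Fin.last d) →
          f (k + 1) (Fin.last d) = f (k + 2) (Fin.last d) :=
        fun k h1 => not_not.mp (fun h2 => noPP k h1 h2)
      have hpar : ∀ j, f (k0 + j) (Fin.last d) ≠ f (k0 + j + 1) (Fin.last d) ↔ Even j := by
        intro j
        induction j with
        | zero => rw [Nat.add_zero]; exact iff_of_true hk0 Even.zero
        | succ j ih =>
          rw [show k0 + (j + 1) = k0 + j + 1 from by omega,
            show k0 + j + 1 + 1 = k0 + j + 2 from by omega]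
          constructor
          · intro hp
            by_contra hev
            rw [Nat.even_add_one, not_not] at hev
            exact noPP (k0 + j) (ih.mpr hev) hp
          · intro hev
            rw [Nat.even_add_one] at hev
            exact halt (k0 + j) (not_not.mp (fun hp => hev (ih.mp hp)))
      have hPper : ∀ k, f (k + n) (Fin.last d) ≠ f (k + n + 1) (Fin.last d) ↔
          f k (Fin.last d) ≠ f (k + 1) (Fin.last d) := by
        intro k
        rw [show k + n + 1 = (k + 1) + n from by omega, hper, hper]
      have hneven : Even n := (hpar n).mp ((hPper k0).mpr hk0)
      obtain ⟨m, hm⟩ := hneven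
      have hm2 : 2 ≤ m := by omega
      -- the shifted sequence F, whose even edges are the matching edges
      set F : ℕ → HV (d + 1) := fun k => f (k + k0) with hF
      have hFadj : ∀ k, DiffAt (F k) (F (k + 1)) (iDir (k + k0)) := by
        intro k
        show DiffAt (f (k + k0)) (f (k + 1 + k0)) _
        rw [show k + 1 + k0 = (k + k0) + 1 from by omega]
        exact hDiff (k + k0)
      have hFcol : ∀ k, colS (d + 1) s(F k, F (k + 1)) = a ∨
          colS (d + 1) s(F k, F (k + 1)) = b := by
        intro k
        show colS (d + 1) s(f (k + k0), f (k + 1 + k0)) = a ∨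
          colS (d + 1) s(f (k + k0), f (k + 1 + k0)) = b
        rw [show k + 1 + k0 = (k + k0) + 1 from by omega]
        exact hcol (k + k0)
      have hFper : ∀ k, F (k + n) = F k := by
        intro k
        show f (k + n + k0) = f (k + k0)
        rw [show k + n + k0 = (k + k0) + n from by omega]
        exact hper (k + k0)
      have hFP : ∀ k, (F k (Fin.last d) ≠ F (k + 1) (Fin.last d)) ↔ Even k := by
        intro k
        show (f (k + k0) (Fin.last d) ≠ f (k + 1 + k0) (Fin.last d)) ↔ Even k
        rw [show k + k0 = k0 + k from by omega, show k + 1 + k0 = k0 + k + 1 from by omega]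
        exact hpar k
      have hFnonMle : ∀ k, F k (Fin.last d) = F (k + 1) (Fin.last d) →
          colS (d + 1) s(F k, F (k + 1)) ≤ d := by
        intro k h
        show colS (d + 1) s(f (k + k0), f (k + 1 + k0)) ≤ d
        rw [show k + 1 + k0 = (k + k0) + 1 from by omega]
        apply hnonMle
        have h2 : f (k + k0) (Fin.last d) = f (k + 1 + k0) (Fin.last d) := h
        rw [show k + 1 + k0 = (k + k0) + 1 from by omega] at h2
        exact h2
      by_cases habb : a = d + 1 ∧ b = d + 1
      · -- impossible: the odd edges are non-matching edges with colour ≤ d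
        have h1 : F 1 (Fin.last d) = F 2 (Fin.last d) := by
          have := (hFP 1)
          by_contra hc
          exact (by decide : ¬ Even 1) (this.mp hc)
        have h2 := hFnonMle 1 h1
        rcases hFcol 1 with h3 | h3 <;> omega
      · -- the non-matching colour α
        set α : ℕ := if a = d + 1 then b else a with hα
        have hαne : α ≠ d + 1 := by
          rw [hα]
          split
          · exact fun hc => habb ⟨by assumption, hc⟩
          · assumption
      -- every non-matching edge has colour α
        have hαor : ∀ k, F k (Fin.last d) = F (k + 1) (Fin.last d) →
            colS (d + 1) s(F k, F (k + 1)) = α := by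
          intro k h
          have hle := hFnonMle k h
          rcases hFcol k with h' | h'
          · by_cases ha : a = d + 1
            · omega
            · rw [hα, if_neg ha]; exact h'
          · by_cases ha : a = d + 1
            · rw [hα, if_pos ha]; exact h'
            · have hbd : b = d + 1 := by rcases hab with h'' | h'' <;> omega
              omega
        have hodd : ∀ k, F (2 * k + 1) (Fin.last d) = F (2 * k + 2) (Fin.last d) := by
          intro k
          by_contra h
          have := (hFP (2 * k + 1)).mp h
          obtain ⟨r, hr⟩ := this
          omega
        have hevenM : ∀ k, DiffAt (F (2 * k)) (F (2 * k + 1)) (Fin.last d) := by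
          intro k
          have hp : F (2 * k) (Fin.last d) ≠ F (2 * k + 1) (Fin.last d) :=
            (hFP (2 * k)).mpr ⟨k, by omega⟩
          have hd := hFadj (2 * k)
          have hil : iDir (2 * k + k0) = Fin.last d := by
            by_contra hc
            exact hp (hd.2 (Fin.last d) (Ne.symm hc))
          exact hil ▸ hd
        have hstep : ∀ k, ∃ i' : Fin d,
            DiffAt (Fin.init (F (2 * k + 1))) (Fin.init (F (2 * k + 2))) i' ∧
            colS (d + 1) s(F (2 * k + 1), F (2 * k + 2)) =
              (colS d s(Fin.init (F (2 * k + 1)), Fin.init (F (2 * k + 2))) +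
                (F (2 * k + 1) (Fin.last d) : ℕ)) % (d + 1) := by
          intro k
          have hd := hFadj (2 * k + 1)
          have hil : iDir (2 * k + 1 + k0) ≠ Fin.last d := fun hc =>
            (hc ▸ hd.1) (hodd k)
          exact step_down hd hil
        choose iP hPdiff hPcol using hstep
        have hd1 : 1 ≤ d := (iP 0).pos
        have hMinit : ∀ k, Fin.init (F (2 * k + 2)) = Fin.init (F (2 * k + 3)) := by
          intro k
          have hd : DiffAt (F (2 * (k + 1))) (F (2 * (k + 1) + 1)) (Fin.last d) := hevenM (k + 1)
          rw [show 2 * (k + 1) = 2 * k + 2 from by omega,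
            show 2 * k + 2 + 1 = 2 * k + 3 from by omega] at hd
          funext j
          show F (2 * k + 2) j.castSucc = F (2 * k + 3) j.castSucc
          exact hd.2 j.castSucc (Fin.castSucc_lt_last j).ne
        have htalt : ∀ k, F (2 * (k + 1) + 1) (Fin.last d) ≠ F (2 * k + 1) (Fin.last d) := by
          intro k
          have h1 : DiffAt (F (2 * (k + 1))) (F (2 * (k + 1) + 1)) (Fin.last d) := hevenM (k + 1)
          have h2 := hodd k
          rw [show 2 * (k + 1) = 2 * k + 2 from by omega] at h1
          intro h
          apply h1.1
          rw [show 2 * k + 2 + 1 = 2 * (k + 1) + 1 from by omega, h, ← h2]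
        set g : ℕ → HV d := fun k => Fin.init (F (2 * k + 1)) with hg
        have hgk1 : ∀ k, g (k + 1) = Fin.init (F (2 * k + 2)) := by
          intro k
          show Fin.init (F (2 * (k + 1) + 1)) = _
          rw [show 2 * (k + 1) + 1 = 2 * k + 3 from by omega, ← hMinit k]
        have hgadj : ∀ k, (Q d).Adj (g k) (g (k + 1)) ∧
            colS d s(g k, g (k + 1)) =
              (α % (d + 1) + (d + 1) - (F (2 * k + 1) (Fin.last d) : ℕ)) % (d + 1) := by
          intro k
          constructor
          · rw [hgk1 k]
            exact Q_adj.mpr ⟨iP k, hPdiff k⟩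
          · have h1 := hPcol k
            have h2 := hαor (2 * k + 1) (by
              rw [show 2 * k + 1 + 1 = 2 * k + 2 from by omega]
              exact hodd k)
            rw [show 2 * k + 1 + 1 = 2 * k + 2 from by omega] at h2
            rw [h2] at h1
            rw [hgk1 k]
            have hvlt := (F (2 * k + 1) (Fin.last d)).isLt
            have hκle : colS d s(g k, Fin.init (F (2 * k + 2))) ≤ d := colS_le (hPdiff k)
            have h1' : (colS d s(g k, Fin.init (F (2 * k + 2))) +
                (F (2 * k + 1) (Fin.last d) : ℕ)) % (d + 1) = α := h1.symm
            exact unshift (by omega) (by omega) h1'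
        -- case m = 2 : direct contradiction via the doubled edge
        rcases Nat.lt_or_ge m 3 with hm3 | hm3
        · have hm' : m = 2 := by omega
          have hg2 : g 2 = g 0 := by
            show Fin.init (F (2 * 2 + 1)) = Fin.init (F (2 * 0 + 1))
            rw [show 2 * 2 + 1 = 2 * 0 + 1 + n from by omega]
            rw [hFper]
          have e0 := (hgadj 0).2
          have e1 := (hgadj 1).2
          rw [show (1 : ℕ) + 1 = 2 from rfl, hg2] at e1
          rw [Sym2.eq_swap] at e1
          have ht01 := htalt 0
          rw [show 2 * (0 + 1) + 1 = 2 * 1 + 1 from by omega] at ht01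
          have hvne : (F (2 * 1 + 1) (Fin.last d) : ℕ) ≠
              (F (2 * 0 + 1) (Fin.last d) : ℕ) := fun hc => ht01 (Fin.ext hc)
          set v0 : ℕ := (F (2 * 0 + 1) (Fin.last d) : ℕ)
          set v1 : ℕ := (F (2 * 1 + 1) (Fin.last d) : ℕ)
          have hv0 := (F (2 * 0 + 1) (Fin.last d)).isLt
          have hv1 := (F (2 * 1 + 1) (Fin.last d)).isLt
          have hc : α % (d + 1) < d + 1 := Nat.mod_lt _ (by omega)
          have hcases : (v0 = 0 ∧ v1 = 1) ∨ (v0 = 1 ∧ v1 = 0) := by omega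
          have heq := e0.symm.trans e1
          rcases hcases with ⟨h0, h1⟩ | ⟨h0, h1⟩
          · rw [h0, h1] at heq
            exact shift_ne (by omega) hc (by
              rw [show α % (d + 1) + (d + 1) - 0 = α % (d + 1) + (d + 1) from by omega] at heq
              exact heq)
          · rw [h0, h1] at heq
            exact shift_ne (by omega) hc (by
              rw [show α % (d + 1) + (d + 1) - 0 = α % (d + 1) + (d + 1) from by omega] at heq
              exact heq.symm)
        · -- m ≥ 3 : get a cyclic sequence in the smaller cube
          apply IH ((α % (d + 1) + (d + 1) - (F 1 (Fin.last d) : ℕ)) % (d + 1))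
            ((α % (d + 1) + (d + 1) - (1 - (F 1 (Fin.last d) : ℕ))) % (d + 1))
          refine ⟨m, g, hm3, ?_, ?_, ?_⟩
          · intro k
            show Fin.init (F (2 * (k + m) + 1)) = Fin.init (F (2 * k + 1))
            rw [show 2 * (k + m) + 1 = (2 * k + 1) + n from by omega, hFper]
          · intro k l hk hl h
            by_contra hne
            by_cases hte : F (2 * k + 1) (Fin.last d) = F (2 * l + 1) (Fin.last d)
            · have hFe : F (2 * k + 1) = F (2 * l + 1) := eq_of_init_last h hte
              have hmod := hmodinj (2 * k + 1 + k0) (2 * l + 1 + k0) hFe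
              have h2 : (2 * k + 1) % n = (2 * l + 1) % n :=
                Nat.ModEq.add_right_cancel' k0 hmod
              rw [Nat.mod_eq_of_lt (by omega), Nat.mod_eq_of_lt (by omega)] at h2
              omega
            · have hdk : DiffAt (F (2 * k + 1)) (F (2 * l + 1)) (Fin.last d) := by
                refine ⟨hte, ?_⟩
                intro j hj
                obtain ⟨j', hj'⟩ := Fin.exists_castSucc_eq.mpr hj
                rw [← hj']
                exact congrFun h j'
              have hdk2 : DiffAt (F (2 * k + 1)) (F (2 * k)) (Fin.last d) :=
                (hevenM k).symm
              have hFe : F (2 * l + 1) = F (2 * k) := hdk.unique hdk2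
              have hmod := hmodinj (2 * l + 1 + k0) (2 * k + k0) hFe
              have h2 : (2 * l + 1) % n = (2 * k) % n :=
                Nat.ModEq.add_right_cancel' k0 hmod
              have h3 : (2 * l + 1) ≡ 2 * k [MOD 2] :=
                Nat.ModEq.of_dvd ⟨m, by omega⟩ h2
              have h4 : (2 * l + 1) % 2 = (2 * k) % 2 := h3
              omega
          · intro k
            refine ⟨(hgadj k).1, ?_⟩
            have hcolg := (hgadj k).2
            have hv1 := (F (2 * k + 1) (Fin.last d)).isLt
            have hv0 := (F 1 (Fin.last d)).isLt
            have : (F (2 * k + 1) (Fin.last d) : ℕ) = (F 1 (Fin.last d) : ℕ) ∨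
                (F (2 * k + 1) (Fin.last d) : ℕ) = 1 - (F 1 (Fin.last d) : ℕ) := by omega
            rcases this with h | h
            · left; rw [hcolg, h]
            · right; rw [hcolg, h]

/-- The colouring with values in `Fin (d+1)`. -/
def cFin (d : ℕ) : Sym2 (HV d) → Fin (d + 1) :=
  fun e => ⟨colS d e % (d + 1), Nat.mod_lt _ (by omega)⟩

lemma cFin_adj {d : ℕ} {x y : HV d} (h : (Q d).Adj x y) {a : Fin (d + 1)} :
    cFin d s(x, y) = a ↔ colS d s(x, y) = (a : ℕ) := by
  obtain ⟨i, hi⟩ := Q_adj.mp h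
  have hle := colS_le hi
  rw [Fin.ext_iff]
  show colS d s(x, y) % (d + 1) = (a : ℕ) ↔ _
  rw [Nat.mod_eq_of_lt (by omega)]

lemma proper_cFin (d : ℕ) : IsProperEdgeColoring (Q d) (cFin d) := by
  intro e₁ he₁ e₂ he₂ hne ⟨v, hv1, hv2⟩
  have hs1 := Sym2.other_spec hv1
  have hs2 := Sym2.other_spec hv2
  set y1 := Sym2.Mem.other hv1 with hy1
  set y2 := Sym2.Mem.other hv2 with hy2
  have ha1 : (Q d).Adj v y1 := by rw [← SimpleGraph.mem_edgeSet, hs1]; exact he₁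
  have ha2 : (Q d).Adj v y2 := by rw [← SimpleGraph.mem_edgeSet, hs2]; exact he₂
  obtain ⟨i1, hi1⟩ := Q_adj.mp ha1
  obtain ⟨i2, hi2⟩ := Q_adj.mp ha2
  have hyne : y1 ≠ y2 := by
    intro hc
    apply hne
    rw [← hs1, ← hs2, hc]
  have hine : i1 ≠ i2 := fun hc => hyne ((hc ▸ hi1).unique hi2)
  have hcne := colS_ne_at hi1 hi2 hine
  rw [← hs1, ← hs2]
  intro hc
  apply hcne
  have h1 := (cFin_adj ha1 (a := cFin d s(v, y1))).mp rfl
  have h2 := (cFin_adj ha2 (a := cFin d s(v, y2))).mp rfl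
  rw [h1, h2, hc]

lemma acyclic_cFin (d : ℕ) (a b : Fin (d + 1)) :
    (twoColourSubgraph (Q d) (cFin d) a b).IsAcyclic := by
  intro v p hp
  obtain ⟨n, f, hn3, hper, hinj, hadj⟩ := seqCyc_of_cycle hp
  apply noSeq d (a : ℕ) (b : ℕ)
  refine ⟨n, f, hn3, hper, hinj, ?_⟩
  intro k
  obtain ⟨hQ, hor⟩ := hadj k
  refine ⟨hQ, ?_⟩
  rcases hor with h | h
  · exact Or.inl ((cFin_adj hQ).mp h)
  · exact Or.inr ((cFin_adj hQ).mp h)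

lemma mem_S (d : ℕ) : ∃ c : Sym2 (HV d) → Fin (d + 1), IsAcyclicEdgeColoring (Q d) c :=
  ⟨cFin d, proper_cFin d, acyclic_cFin d⟩

/-- Flip coordinate `i`. -/
def flip {d : ℕ} (i : Fin d) (v : HV d) : HV d := Function.update v i (v i + 1)

lemma fin2_add_one_ne : ∀ x : Fin 2, x + 1 ≠ x := by decide
lemma fin2_eq_add_one : ∀ x y : Fin 2, x ≠ y → x = y + 1 := by decide
lemma fin2_mem : ∀ x y z : Fin 2, x ≠ y → z = x ∨ z = y := by decide

lemma flip_diffAt {d : ℕ} (i : Fin d) (v : HV d) : DiffAt v (flip i v) i := by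
  constructor
  · rw [flip, Function.update_self]
    exact (fin2_add_one_ne (v i)).symm
  · intro j hj
    rw [flip, Function.update_of_ne hj]

lemma flip_adj {d : ℕ} (i : Fin d) (v : HV d) : (Q d).Adj v (flip i v) :=
  Q_adj.mpr ⟨i, flip_diffAt i v⟩

lemma eq_flip_of_diffAt {d : ℕ} {v w : HV d} {i : Fin d} (h : DiffAt v w i) :
    w = flip i v := by
  funext j
  by_cases hj : j = i
  · subst hj
    rw [flip, Function.update_self]
    exact fin2_eq_add_one _ _ h.1.symm
  · rw [flip, Function.update_of_ne hj]
    exact (h.2 j hj).symm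

lemma flip_ne_flip {d : ℕ} {i j : Fin d} (v : HV d) (h : i ≠ j) : flip i v ≠ flip j v := by
  intro hc
  have h1 := congrFun hc i
  rw [flip, flip, Function.update_self, Function.update_of_ne h] at h1
  exact fin2_add_one_ne (v i) h1

/-- Lower bound: any acyclic proper edge colouring of `Q d`, `d ≥ 2`, needs at
least `d + 1` colours. -/
lemma lower_bound (d : ℕ) (hd : 2 ≤ d) (n : ℕ)
    (hc : ∃ c : Sym2 (HV d) → Fin n, IsAcyclicEdgeColoring (Q d) c) : d + 1 ≤ n := by
  by_contra hlt
  push_neg at hlt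
  obtain ⟨c, hproper, hacyc⟩ := hc
  have hv0 : HV d := fun _ => 0
  have hDinj : ∀ v : HV d, Function.Injective (fun i : Fin d => c s(v, flip i v)) := by
    intro v i j hij
    by_contra hne
    refine hproper s(v, flip i v) ((Q d).mem_edgeSet.mpr (flip_adj i v))
      s(v, flip j v) ((Q d).mem_edgeSet.mpr (flip_adj j v)) ?_
      ⟨v, Sym2.mem_mk_left v _, Sym2.mem_mk_left v _⟩ hij
    intro he
    exact flip_ne_flip v hne (Sym2.congr_right.mp he)
  have hdn : d ≤ n := by
    have := Fintype.card_le_of_injective _ (hDinj (fun _ => 0))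
    simpa using this
  have hsurj : ∀ v : HV d, Function.Surjective (fun i : Fin d => c s(v, flip i v)) := by
    intro v
    have hb : Function.Bijective (fun i : Fin d => c s(v, flip i v)) :=
      (Fintype.bijective_iff_injective_and_card _).mpr
        ⟨hDinj v, by simp only [Fintype.card_fin]; omega⟩
    exact hb.2
  have hex : ∀ (v : HV d) (γ : Fin n), ∃ w, (Q d).Adj v w ∧ c s(v, w) = γ := by
    intro v γ
    obtain ⟨i, hi⟩ := hsurj v γ
    exact ⟨flip i v, flip_adj i v, hi⟩
  have huniq : ∀ (v w w' : HV d) (γ : Fin n), (Q d).Adj v w → c s(v, w) = γ →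
      (Q d).Adj v w' → c s(v, w') = γ → w = w' := by
    intro v w w' γ h1 e1 h2 e2
    obtain ⟨i, hi⟩ := Q_adj.mp h1
    obtain ⟨j, hj⟩ := Q_adj.mp h2
    have hw : w = flip i v := eq_flip_of_diffAt hi
    have hw' : w' = flip j v := eq_flip_of_diffAt hj
    have hij : i = j := by
      apply hDinj v
      show c s(v, flip i v) = c s(v, flip j v)
      rw [← hw, ← hw', e1, e2]
    rw [hw, hw', hij]
  set γ0 : Fin n := ⟨0, by omega⟩ with hγ0
  set γ1 : Fin n := ⟨1, by omega⟩ with hγ1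
  have hγne : γ0 ≠ γ1 := by
    intro hc'
    have := congrArg Fin.val hc'
    simp [hγ0, hγ1] at this
  choose φ hφa hφc using fun v => hex v γ0
  choose ψ hψa hψc using fun v => hex v γ1
  have hφψ : ∀ v, φ v ≠ ψ v := by
    intro v hc'
    apply hγne
    rw [← hφc v, hc', hψc v]
  set H := twoColourSubgraph (Q d) c γ0 γ1 with hH
  have hHadj1 : ∀ v, H.Adj v (φ v) := fun v => ⟨hφa v, Or.inl (hφc v)⟩
  have hHadj2 : ∀ v, H.Adj v (ψ v) := fun v => ⟨hψa v, Or.inr (hψc v)⟩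
  have hHchar : ∀ v w, H.Adj v w → w = φ v ∨ w = ψ v := by
    rintro v w ⟨hq, hor⟩
    rcases hor with h | h
    · exact Or.inl (huniq v w (φ v) γ0 hq h (hφa v) (hφc v))
    · exact Or.inr (huniq v w (ψ v) γ1 hq h (hψa v) (hψc v))
  classical
  set v0 : HV d := fun _ => 0 with hv0'
  set next : HV d → HV d → HV d := fun prev cur => if prev = φ cur then ψ cur else φ cur
    with hnext
  set q : ℕ → HV d × HV d :=
    fun k => Nat.rec ((v0, φ v0) : HV d × HV d) (fun _ p => (p.2, next p.1 p.2)) k with hq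
  set g : ℕ → HV d := fun k => (q k).1 with hg
  have hg1 : ∀ k, g (k + 1) = (q k).2 := fun k => rfl
  have hg2 : ∀ k, g (k + 2) = next (g k) (g (k + 1)) := fun k => rfl
  have hgadj : ∀ k, H.Adj (g k) (g (k + 1)) := by
    intro k
    cases k with
    | zero => exact hHadj1 v0
    | succ k =>
      rw [hg2 k, hnext]
      dsimp only
      split
      · exact hHadj2 (g (k + 1))
      · exact hHadj1 (g (k + 1))
  have hnb : ∀ k, g (k + 2) ≠ g k := by
    intro k
    rw [hg2 k, hnext]
    dsimp only
    have hch := hHchar _ _ ((hgadj k).symm)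
    split
    · rename_i hcase
      rw [hcase]
      exact fun hc' => hφψ (g (k + 1)) hc'.symm
    · rename_i hcase
      rcases hch with h | h
      · exact absurd h hcase
      · rw [h]
        exact fun hc' => hφψ (g (k + 1)) hc'
  have hseq := seqCyc_of_nonbacktracking g hgadj hnb
  exact hseq.not_isAcyclic (hacyc γ0 γ1)

/- The degenerate one-dimensional case. -/

lemma hv1_eq (x y : HV 1) (h : x 0 = y 0) : x = y := by
  funext j
  have hj : j = 0 := Subsingleton.elim j 0
  rw [hj]; exact h

lemma hv1_mem (x y z : HV 1) (h : x ≠ y) : z = x ∨ z = y := by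
  have h0 : x 0 ≠ y 0 := fun hc => h (hv1_eq x y hc)
  rcases fin2_mem (x 0) (y 0) (z 0) h0 with h' | h'
  · exact Or.inl (hv1_eq z x h')
  · exact Or.inr (hv1_eq z y h')

lemma edge_unique : ∀ e₁ ∈ (Q 1).edgeSet, ∀ e₂ ∈ (Q 1).edgeSet, e₁ = e₂ := by
  intro e₁ he₁ e₂ he₂
  induction e₁ using Sym2.ind with
  | _ x1 y1 =>
    induction e₂ using Sym2.ind with
    | _ x2 y2 =>
      rw [SimpleGraph.mem_edgeSet] at he₁ he₂
      have h1 : x1 ≠ y1 := he₁.ne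
      have h2 : x2 ≠ y2 := he₂.ne
      rcases hv1_mem x1 y1 x2 h1 with hx | hx <;> rcases hv1_mem x1 y1 y2 h1 with hy | hy
      · exact absurd (hx.trans hy.symm) h2
      · rw [hx, hy]
      · rw [hx, hy, Sym2.eq_swap]
      · exact absurd (hx.trans hy.symm) h2

lemma proper_one : IsProperEdgeColoring (Q 1) (fun _ : Sym2 (HV 1) => (0 : Fin 1)) :=
  fun e₁ he₁ e₂ he₂ hne _ => absurd (edge_unique e₁ he₁ e₂ he₂) hne

lemma acyclic_one (c0 : Sym2 (HV 1) → Fin 1) (a b : Fin 1) :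
    (twoColourSubgraph (Q 1) c0 a b).IsAcyclic := by
  intro v p hp
  obtain ⟨n, f, hn3, hper, hinj, hadj⟩ := seqCyc_of_cycle hp
  have h01 : f 0 ≠ f 1 := fun h => by have := hinj 0 1 (by omega) (by omega) h; omega
  have h02 : f 0 ≠ f 2 := fun h => by have := hinj 0 2 (by omega) (by omega) h; omega
  have h12 : f 1 ≠ f 2 := fun h => by have := hinj 1 2 (by omega) (by omega) h; omega
  rcases hv1_mem (f 0) (f 1) (f 2) h01 with h | h
  · exact h02 h.symm
  · exact h12 h.symm

end AEC

/-- The acyclic chromatic index of the `d`-dimensional hypercube `Q_d = K₂^d`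
equals `d + 1` for all `d ≥ 2`, and equals `1` for `d = 1`. -/
theorem acyclicChromaticIndex_hypercube (d : ℕ) :
    (2 ≤ d →
      acyclicChromaticIndex (piBoxProd (fun _ : Fin d => (⊤ : SimpleGraph (Fin 2)))) = d + 1) ∧
    (d = 1 →
      acyclicChromaticIndex (piBoxProd (fun _ : Fin d => (⊤ : SimpleGraph (Fin 2)))) = 1) := by
  constructor
  · intro hd
    show sInf {n | ∃ c : Sym2 (AEC.HV d) → Fin n, IsAcyclicEdgeColoring (AEC.Q d) c} = d + 1
    apply le_antisymm
    · exact Nat.sInf_le (AEC.mem_S d)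
    · exact le_csInf ⟨d + 1, AEC.mem_S d⟩ (fun m hm => AEC.lower_bound d hd m hm)
  · intro hd
    subst hd
    show sInf {n | ∃ c : Sym2 (AEC.HV 1) → Fin n, IsAcyclicEdgeColoring (AEC.Q 1) c} = 1
    have h1 : 1 ∈ {n | ∃ c : Sym2 (AEC.HV 1) → Fin n, IsAcyclicEdgeColoring (AEC.Q 1) c} :=
      ⟨fun _ => 0, AEC.proper_one, AEC.acyclic_one _⟩
    apply le_antisymm
    · exact Nat.sInf_le h1
    · by_contra hlt
      push_neg at hlt
      have h0 := Nat.sInf_mem (⟨1, h1⟩ :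
        Set.Nonempty {n | ∃ c : Sym2 (AEC.HV 1) → Fin n, IsAcyclicEdgeColoring (AEC.Q 1) c})
      rw [show sInf {n | ∃ c : Sym2 (AEC.HV 1) → Fin n,
        IsAcyclicEdgeColoring (AEC.Q 1) c} = 0 from by omega] at h0
      obtain ⟨c, -⟩ := h0
      exact (c s(fun _ => 0, fun _ => 0)).elim0
end

section
/- Let G and H be graphs with acyclic edge colourings X_G: E_G → {0,…,η−1} and X_H: E_H → {0',…,(β−1)'} using disjoint colour sets, let Y_H be a proper vertex colouring of H with colours {0,…,d−1} where d ≤ η, and define σ_i(j) = (j+i) mod η. Then the edge colouring X of G □ H defined by X(f_u) = X_H(f) for copies of H-edges and X(e_v) = σ_{Y_H(v)}(X_G(e)) for copies of G-edges is a proper edge colouring. -/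
open SimpleGraph

/-- The product colouring of `G □ H` (copies of `H`-edges coloured by `X_H`, the copy
`G_v` of `G` coloured by the `Y_H(v)`-th cyclic shift of `X_G`, with disjoint colour sets
modelled by a sum type) is a proper edge colouring. -/
theorem productColoring_proper {α β : Type*} (G : SimpleGraph α) (H : SimpleGraph β)
    {η βc d : ℕ} [NeZero η] (hd : d ≤ η)
    (cG : Sym2 α → Fin η) (cH : Sym2 β → Fin βc)
    (hcG : IsAcyclicEdgeColoring G cG) (hcH : IsAcyclicEdgeColoring H cH)
    (Y : β → Fin d) (hY : ∀ v w : β, H.Adj v w → Y v ≠ Y w)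
    (X : Sym2 (α × β) → Fin η ⊕ Fin βc)
    (hXH : ∀ (u : α) (v₁ v₂ : β), H.Adj v₁ v₂ →
      X s((u, v₁), (u, v₂)) = Sum.inr (cH s(v₁, v₂)))
    (hXG : ∀ (u₁ u₂ : α) (v : β), G.Adj u₁ u₂ →
      X s((u₁, v), (u₂, v)) = Sum.inl (cG s(u₁, u₂) + Fin.castLE hd (Y v))) :
    IsProperEdgeColoring (G □ H) X := by
  intro e₁ he₁ e₂ he₂ hne hshare
  induction e₁ using Sym2.inductionOn with
  | hf a b =>
  induction e₂ using Sym2.inductionOn with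
  | hf c d =>
  obtain ⟨a1, a2⟩ := a
  obtain ⟨b1, b2⟩ := b
  obtain ⟨c1, c2⟩ := c
  obtain ⟨d1, d2⟩ := d
  rw [SimpleGraph.mem_edgeSet, SimpleGraph.boxProd_adj] at he₁ he₂
  obtain ⟨z, hz1, hz2⟩ := hshare
  rw [Sym2.mem_iff] at hz1 hz2
  rcases he₁ with ⟨hG1, h21⟩ | ⟨hH1, h11⟩ <;> rcases he₂ with ⟨hG2, h22⟩ | ⟨hH2, h12⟩
  · -- G-G
    dsimp at hG1 hG2 h21 h22
    subst h21; subst h22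
    have hsnd : a2 = c2 := by
      rcases hz1 with h | h <;> rcases hz2 with h' | h' <;>
        simpa using congrArg Prod.snd (h.symm.trans h')
    subst hsnd
    rw [hXG a1 b1 a2 hG1, hXG c1 d1 a2 hG2]
    intro h
    injection h with h
    have hcc : cG s(a1, b1) = cG s(c1, d1) := add_right_cancel h
    have hne' : s(a1, b1) ≠ s(c1, d1) := by
      intro heq
      exact hne (by simpa using congrArg (Sym2.map (fun u => (u, a2))) heq)
    refine hcG.1 s(a1, b1) hG1 s(c1, d1) hG2 hne' ⟨z.1, ?_, ?_⟩ hcc <;>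
      rw [Sym2.mem_iff]
    · rcases hz1 with h | h <;> simp [h]
    · rcases hz2 with h | h <;> simp [h]
  · -- G-H
    dsimp at hG1 h21 h12
    subst h21; subst h12
    rw [hXG a1 b1 a2 hG1, hXH c1 c2 d2 hH2]
    simp
  · -- H-G
    dsimp at hH1 h11 h22
    subst h11; subst h22
    rw [hXH a1 a2 b2 hH1, hXG c1 d1 c2 hG2]
    simp
  · -- H-H
    dsimp at hH1 hH2 h11 h12
    subst h11; subst h12
    have hfst : a1 = c1 := by
      rcases hz1 with h | h <;> rcases hz2 with h' | h' <;>
        simpa using congrArg Prod.fst (h.symm.trans h')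
    subst hfst
    rw [hXH a1 a2 b2 hH1, hXH a1 c2 d2 hH2]
    intro h
    injection h with h
    have hne' : s(a2, b2) ≠ s(c2, d2) := by
      intro heq
      exact hne (by simpa using congrArg (Sym2.map (fun v => (a1, v))) heq)
    refine hcH.1 s(a2, b2) hH1 s(c2, d2) hH2 hne' ⟨z.2, ?_, ?_⟩ h <;>
      rw [Sym2.mem_iff]
    · rcases hz1 with h | h <;> simp [h]
    · rcases hz2 with h | h <;> simp [h]
end

section
/- Let X be the product colouring of G □ H (copies of H-edges coloured by X_H, copies of G-edges in G_v coloured by σ_{Y_H(v)} ∘ X_G with colour sets of X_G and X_H disjoint). If C is a bichromatic cycle of G □ H under X using one colour a from the G-colours and one colour b from the H-colours, then C lies entirely within the union of two copies G_{v1} and G_{v2} for some edge {v1,v2} of H, and the length of C is divisible by 4. -/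
open SimpleGraph

lemma alt_count : ∀ (l : List Bool) (x y : Bool), l.Chain' (· ≠ ·) →
    l.head? = some x → l.getLast? = some y → x ≠ y →
    2 * l.count true = l.length
  | [], _, _, _, hh, _, _ => by simp at hh
  | [u], x, y, _, hh, hl, hxy => by
    simp at hh hl
    exact absurd (hh.symm.trans hl) hxy
  | [u, v], x, y, hc, hh, hl, hxy => by
    have huv : u ≠ v := (List.isChain_cons_cons.mp hc).1
    cases u <;> cases v <;> simp_all
  | u :: v :: w :: t, x, y, hc, hh, hl, hxy => by
    have h1 : u ≠ v := (List.isChain_cons_cons.mp hc).1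
    have hc2 := (List.isChain_cons_cons.mp hc).2
    have h2 : v ≠ w := (List.isChain_cons_cons.mp hc2).1
    have hc3 := (List.isChain_cons_cons.mp hc2).2
    have hwu : w = u := by revert h1 h2; cases u <;> cases v <;> cases w <;> simp
    have hux : u = x := by simpa using hh
    have hl' : (w :: t).getLast? = some y := by
      rw [List.getLast?_cons_cons, List.getLast?_cons_cons] at hl; exact hl
    have hrec := alt_count (w :: t) w y hc3 rfl hl' (by rw [hwu, hux]; exact hxy)
    have hcount : (u :: v :: w :: t).count true = (w :: t).count true + 1 := by
      revert h1; cases u <;> cases v <;> simp [List.count_cons]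
    simp only [List.length_cons] at *
    omega

/-- Under the product colouring of `G □ H`, a bichromatic cycle using one `G`-side colour
`a` and one `H`-side colour `b` lies entirely within the union of two copies `G_{v₁}` and
`G_{v₂}` for some edge `{v₁, v₂}` of `H`, and its length is divisible by 4. -/
theorem bichromatic_cycle_structure {α β : Type*} (G : SimpleGraph α) (H : SimpleGraph β)
    {η βc d : ℕ} [NeZero η] (hd : d ≤ η)
    (cG : Sym2 α → Fin η) (cH : Sym2 β → Fin βc)
    (hcG : IsAcyclicEdgeColoring G cG) (hcH : IsAcyclicEdgeColoring H cH)
    (Y : β → Fin d) (hY : ∀ v w : β, H.Adj v w → Y v ≠ Y w)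
    (X : Sym2 (α × β) → Fin η ⊕ Fin βc)
    (hXH : ∀ (u : α) (v₁ v₂ : β), H.Adj v₁ v₂ →
      X s((u, v₁), (u, v₂)) = Sum.inr (cH s(v₁, v₂)))
    (hXG : ∀ (u₁ u₂ : α) (v : β), G.Adj u₁ u₂ →
      X s((u₁, v), (u₂, v)) = Sum.inl (cG s(u₁, u₂) + Fin.castLE hd (Y v)))
    (a : Fin η) (b : Fin βc) :
    ∀ (x : α × β) (p : (G □ H).Walk x x), p.IsCycle →
      (∀ e ∈ p.edges, X e = Sum.inl a ∨ X e = Sum.inr b) →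
      (∃ e ∈ p.edges, X e = Sum.inl a) → (∃ e ∈ p.edges, X e = Sum.inr b) →
      ∃ v₁ v₂ : β, H.Adj v₁ v₂ ∧ (∀ y ∈ p.support, y.2 = v₁ ∨ y.2 = v₂) ∧
        4 ∣ p.length := by
  classical
  intro x p hcyc hcol _ha hb
  -- Step 0: decode colours into edge types
  have hA : ∀ u w : α × β, (G □ H).Adj u w → X s(u, w) = Sum.inl a →
      u.2 = w.2 ∧ G.Adj u.1 w.1 ∧ cG s(u.1, w.1) + Fin.castLE hd (Y u.2) = a := by
    rintro ⟨u1, u2⟩ ⟨w1, w2⟩ hadj hX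
    rw [SimpleGraph.boxProd_adj] at hadj
    rcases hadj with ⟨hG, h2⟩ | ⟨hH, h1⟩
    · dsimp only at hG h2 ⊢
      subst h2
      rw [hXG u1 w1 u2 hG] at hX
      exact ⟨rfl, hG, Sum.inl.inj hX⟩
    · dsimp only at h1 hH
      subst h1
      rw [hXH u1 u2 w2 hH] at hX
      simp at hX
  have hB : ∀ u w : α × β, (G □ H).Adj u w → X s(u, w) = Sum.inr b →
      u.1 = w.1 ∧ H.Adj u.2 w.2 ∧ cH s(u.2, w.2) = b := by
    rintro ⟨u1, u2⟩ ⟨w1, w2⟩ hadj hX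
    rw [SimpleGraph.boxProd_adj] at hadj
    rcases hadj with ⟨hG, h2⟩ | ⟨hH, h1⟩
    · dsimp only at hG h2; subst h2; rw [hXG u1 w1 u2 hG] at hX; simp at hX
    · dsimp only at h1 hH; subst h1; rw [hXH u1 u2 w2 hH] at hX
      exact ⟨rfl, hH, Sum.inr.inj hX⟩
  -- no two a-edges (resp. b-edges) share a vertex
  have La : ∀ z u w : α × β, (G □ H).Adj z u → (G □ H).Adj z w → u ≠ w →
      X s(z, u) = Sum.inl a → X s(z, w) = Sum.inl a → False := by
    intro z u w hzu hzw huw hXu hXw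
    obtain ⟨e2u, hGu, hcu⟩ := hA z u hzu hXu
    obtain ⟨e2w, hGw, hcw⟩ := hA z w hzw hXw
    have hne1 : u.1 ≠ w.1 := fun h => huw (Prod.ext h (e2u.symm.trans e2w))
    have hcc : cG s(z.1, u.1) = cG s(z.1, w.1) := add_right_cancel (hcu.trans hcw.symm)
    exact hcG.1 s(z.1, u.1) (G.mem_edgeSet.mpr hGu) s(z.1, w.1) (G.mem_edgeSet.mpr hGw)
      (fun h => hne1 (Sym2.congr_right.mp h)) ⟨z.1, by simp, by simp⟩ hcc
  have Lb : ∀ z u w : α × β, (G □ H).Adj z u → (G □ H).Adj z w → u ≠ w →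
      X s(z, u) = Sum.inr b → X s(z, w) = Sum.inr b → False := by
    intro z u w hzu hzw huw hXu hXw
    obtain ⟨e1u, hHu, hcu⟩ := hB z u hzu hXu
    obtain ⟨e1w, hHw, hcw⟩ := hB z w hzw hXw
    have hne2 : u.2 ≠ w.2 := fun h => huw (Prod.ext (e1u.symm.trans e1w) h)
    exact hcH.1 s(z.2, u.2) (H.mem_edgeSet.mpr hHu) s(z.2, w.2) (H.mem_edgeSet.mpr hHw)
      (fun h => hne2 (Sym2.congr_right.mp h)) ⟨z.2, by simp, by simp⟩ (hcu.trans hcw.symm)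
  -- Step 1: all support vertices have fibre x.2 or a b-matched neighbour of x.2
  have key : ∀ (y z : α × β) (q : (G □ H).Walk y z),
      (∀ e ∈ q.edges, X e = Sum.inl a ∨ X e = Sum.inr b) →
      ∀ w ∈ q.support, w.2 = y.2 ∨ (H.Adj y.2 w.2 ∧ cH s(y.2, w.2) = b) := by
    intro y z q
    induction q with
    | nil => intro _ w hw; rw [Walk.support_nil, List.mem_singleton] at hw; subst hw; exact Or.inl rfl
    | @cons y' m z' hadj q' ih =>
      intro hcl w hw
      rw [Walk.support_cons] at hw
      rcases List.mem_cons.mp hw with rfl | hw'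
      · exact Or.inl rfl
      · have hfirst := hcl s(y', m) (by rw [Walk.edges_cons]; exact List.mem_cons_self)
        have hrest : ∀ e ∈ q'.edges, X e = Sum.inl a ∨ X e = Sum.inr b :=
          fun e he => hcl e (by rw [Walk.edges_cons]; exact List.mem_cons_of_mem _ he)
        rcases hfirst with hfa | hfb
        · have h2 : y'.2 = m.2 := (hA y' m hadj hfa).1
          rw [h2]
          exact ih hrest w hw'
        · obtain ⟨-, hHadj, hcb⟩ := hB y' m hadj hfb
          rcases ih hrest w hw' with h | ⟨hH2, hcb2⟩
          · right; rw [h]; exact ⟨hHadj, hcb⟩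
          · by_cases heq : s(y'.2, m.2) = s(m.2, w.2)
            · left
              rcases Sym2.eq_iff.mp heq with ⟨h1, h2⟩ | ⟨h1, h2⟩
              · exact absurd h1 hHadj.ne
              · exact h1.symm
            · exact absurd (hcb.trans hcb2.symm)
                (hcH.1 s(y'.2, m.2) (H.mem_edgeSet.mpr hHadj) s(m.2, w.2)
                  (H.mem_edgeSet.mpr hH2) heq ⟨m.2, by simp, by simp⟩)
  have keyp := key x x p hcol
  -- find the b-matched neighbour v2 of x.2
  obtain ⟨eb, hebm, hebX⟩ := hb
  obtain ⟨dd, hddm, hdde⟩ := List.mem_map.mp (hebm : eb ∈ p.darts.map SimpleGraph.Dart.edge)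
  have hXdd : X s(dd.fst, dd.snd) = Sum.inr b := by
    rw [show s(dd.fst, dd.snd) = eb from hdde]; exact hebX
  have hBd := hB dd.fst dd.snd dd.adj hXdd
  have hfst := Walk.dart_fst_mem_support_of_mem_darts p hddm
  have hsnd := Walk.dart_snd_mem_support_of_mem_darts p hddm
  have hv2 : ∃ v2, H.Adj x.2 v2 ∧ cH s(x.2, v2) = b := by
    rcases keyp dd.fst hfst with h1 | h1
    · rcases keyp dd.snd hsnd with h2 | h2
      · exact absurd (h1.trans h2.symm) hBd.2.1.ne
      · exact ⟨dd.snd.2, h2⟩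
    · exact ⟨dd.fst.2, h1⟩
  obtain ⟨v2, hv2adj, hv2c⟩ := hv2
  have huniq : ∀ w, H.Adj x.2 w → cH s(x.2, w) = b → w = v2 := by
    intro w hw hwc
    by_contra hne
    exact hcH.1 s(x.2, w) (H.mem_edgeSet.mpr hw) s(x.2, v2) (H.mem_edgeSet.mpr hv2adj)
      (fun h => hne (Sym2.congr_right.mp h)) ⟨x.2, by simp, by simp⟩ (hwc.trans hv2c.symm)
  have hsup : ∀ y ∈ p.support, y.2 = x.2 ∨ y.2 = v2 := by
    intro w hw
    rcases keyp w hw with h | ⟨h1, h2⟩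
    · exact Or.inl h
    · exact Or.inr (huniq _ h1 h2)
  refine ⟨x.2, v2, hv2adj, hsup, ?_⟩

  -- Step 2: parity of the number of b-edges
  have hxv2 : x.2 ≠ v2 := hv2adj.ne
  have hpar : ∀ (y z : α × β) (q : (G □ H).Walk y z),
      (∀ e ∈ q.edges, X e = Sum.inl a ∨ X e = Sum.inr b) →
      (∀ w ∈ q.support, w.2 = x.2 ∨ w.2 = v2) →
      (if z.2 = x.2 then (0 : ZMod 2) else 1)
        = (if y.2 = x.2 then (0 : ZMod 2) else 1)
          + (q.edges.countP (fun e => decide (X e = Sum.inr b)) : ℕ) := by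
    intro y z q
    induction q with
    | nil => intro _ _; simp
    | @cons y' m z' hadj q' ih =>
      intro hcl hsp
      have hcl' : ∀ e ∈ q'.edges, X e = Sum.inl a ∨ X e = Sum.inr b :=
        fun e he => hcl e (by rw [Walk.edges_cons]; exact List.mem_cons_of_mem _ he)
      have hsp' : ∀ w ∈ q'.support, w.2 = x.2 ∨ w.2 = v2 :=
        fun w hw => hsp w (by rw [Walk.support_cons]; exact List.mem_cons_of_mem _ hw)
      have hq := ih hcl' hsp'
      rw [Walk.edges_cons, List.countP_cons]
      rcases hcl s(y', m) (by rw [Walk.edges_cons]; exact List.mem_cons_self) with hfa | hfb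
      · have h2 : y'.2 = m.2 := (hA _ _ hadj hfa).1
        rw [hq, h2]
        simp [hfa]
      · obtain ⟨-, hHadj, -⟩ := hB _ _ hadj hfb
        have hym : y'.2 ≠ m.2 := hHadj.ne
        have hy's : y'.2 = x.2 ∨ y'.2 = v2 :=
          hsp _ (by rw [Walk.support_cons]; exact List.mem_cons_self)
        have hms : m.2 = x.2 ∨ m.2 = v2 := hsp' m q'.start_mem_support
        have hflip : (if m.2 = x.2 then (0 : ZMod 2) else 1)
            = (if y'.2 = x.2 then (0 : ZMod 2) else 1) + 1 := by
          rcases hy's with h | h <;> rcases hms with h' | h'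
          · exact absurd (h.trans h'.symm) hym
          · simp [h, h', Ne.symm hxv2]
          · simp [h, h', Ne.symm hxv2]; decide
          · exact absurd (h.trans h'.symm) hym
        rw [hq, hflip]
        simp [hfb]
        push_cast
        ring
  have hclosed := hpar x x p hcol hsup
  have hk2 : 2 ∣ p.edges.countP (fun e => decide (X e = Sum.inr b)) := by
    have h0 : ((p.edges.countP (fun e => decide (X e = Sum.inr b)) : ℕ) : ZMod 2) = 0 :=
      left_eq_add.mp hclosed
    exact (ZMod.natCast_eq_zero_iff _ 2).mp h0
  -- Step 3: alternation
  have hchain : ∀ (y z : α × β) (q : (G □ H).Walk y z), q.edges.Nodup →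
      (∀ e ∈ q.edges, X e = Sum.inl a ∨ X e = Sum.inr b) →
      (q.edges.map (fun e => decide (X e = Sum.inr b))).Chain' (· ≠ ·) := by
    intro y z q
    induction q with
    | nil => intro _ _; simp; exact List.isChain_nil
    | @cons y' m z' hadj q' ih =>
      intro hnd hcl
      cases q' with
      | nil => simp; exact List.isChain_singleton _
      | @cons _ m2 _ hadj2 q'' =>
        simp only [Walk.edges_cons, List.map_cons] at hnd hcl ⊢
        refine List.isChain_cons_cons.mpr ⟨?_, ?_⟩
        · have hdne : s(y', m) ≠ s(m, m2) := by
            intro h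
            have hmem : s(y', m) ∈ s(m, m2) :: q''.edges := by
              rw [h]; exact List.mem_cons_self
            exact (List.nodup_cons.mp hnd).1 hmem
          have hym2 : y' ≠ m2 := fun h => hdne (by rw [h, Sym2.eq_swap])
          have hc1 := hcl s(y', m) (List.mem_cons_self)
          have hc2 := hcl s(m, m2) (List.mem_cons_of_mem _ (List.mem_cons_self))
          have hneX : X s(y', m) ≠ X s(m, m2) := by
            intro heq
            rcases hc1 with hfa | hfb
            · exact La m y' m2 hadj.symm hadj2 hym2 (by rwa [Sym2.eq_swap])
                (heq.symm.trans hfa)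
            · exact Lb m y' m2 hadj.symm hadj2 hym2 (by rwa [Sym2.eq_swap])
                (heq.symm.trans hfb)
          rcases hc1 with h1 | h1 <;> rcases hc2 with h2 | h2 <;> simp [h1, h2] <;>
            exact hneX (h1.trans h2.symm)
        · have hrec := ih (List.nodup_cons.mp hnd).2
            (fun e he => hcl e (List.mem_cons_of_mem _ he))
          simpa [Walk.edges_cons, List.Chain'] using hrec
  -- Step 4: assemble
  have hcount : 2 * p.edges.countP (fun e => decide (X e = Sum.inr b)) = p.length := by
    have hnodup := hcyc.edges_nodup
    have hch := hchain x x p hnodup hcol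
    have hlen3 := hcyc.three_le_length
    cases p with
    | nil => simp at hlen3
    | @cons _ m1 _ hadj1 q =>
      cases hrev : (Walk.cons hadj1 q).reverse with
      | nil =>
        have hnil : (Walk.cons hadj1 q).edges.reverse = [] := by
          rw [← Walk.edges_reverse, hrev, Walk.edges_nil]
        simp [Walk.edges_cons] at hnil
      | @cons _ m2 _ hadj2 qr =>
        have hlast : (Walk.cons hadj1 q).edges.getLast? = some s(x, m2) := by
          rw [List.getLast?_eq_head?_reverse, ← Walk.edges_reverse, hrev,
            Walk.edges_cons, List.head?_cons]
        have hhead : (Walk.cons hadj1 q).edges.head? = some s(x, m1) := by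
          rw [Walk.edges_cons, List.head?_cons]
        have hlmem : s(x, m2) ∈ (Walk.cons hadj1 q).edges :=
          List.mem_of_getLast? hlast
        have hhmem : s(x, m1) ∈ (Walk.cons hadj1 q).edges := by
          rw [Walk.edges_cons]; exact List.mem_cons_self
        have hne12 : m1 ≠ m2 := by
          intro h
          subst h
          rw [Walk.edges_cons] at hlast hnodup
          have hq2 : 2 ≤ q.edges.length := by
            have hl := Walk.length_edges q
            have hl2 : (Walk.cons hadj1 q).length = q.length + 1 := Walk.length_cons _ _
            omega
          obtain ⟨e2, t, ht⟩ : ∃ e2 t, q.edges = e2 :: t := by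
            cases hqe : q.edges with
            | nil => rw [hqe] at hq2; simp at hq2
            | cons e2 t => exact ⟨e2, t, rfl⟩
          rw [ht, List.getLast?_cons_cons] at hlast
          have hmem : s(x, m1) ∈ e2 :: t := List.mem_of_getLast? hlast
          rw [ht] at hnodup
          exact (List.nodup_cons.mp hnodup).1 hmem
        have hXne : X s(x, m1) ≠ X s(x, m2) := by
          intro heq
          rcases hcol _ hhmem with h1 | h1
          · exact La x m1 m2 hadj1 hadj2 hne12 h1 (heq.symm.trans h1)
          · exact Lb x m1 m2 hadj1 hadj2 hne12 h1 (heq.symm.trans h1)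
        have hbne : (decide (X s(x, m1) = Sum.inr b)) ≠ (decide (X s(x, m2) = Sum.inr b)) := by
          rcases hcol _ hhmem with h1 | h1 <;> rcases hcol _ hlmem with h2 | h2 <;>
            simp [h1, h2] <;> exact hXne (h1.trans h2.symm)
        have halt := alt_count
          ((Walk.cons hadj1 q).edges.map (fun e => decide (X e = Sum.inr b))) _ _ hch
          (by rw [List.head?_map, hhead]; rfl) (by rw [List.getLast?_map, hlast]; rfl) hbne
        rw [List.length_map, Walk.length_edges] at halt
        rw [← halt, List.count_eq_countP, List.countP_map]
        simp [Function.comp_def]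
  omega
end
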